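/- arXiv:1403.5171 — 8 statements merged into one kernel-verified Lean document; each statement's English description precedes it below -/
import Mathlib

section
/- Let (G,w) be a finite weighted graph with positive real edge weights, let h ≥ 1 be an integer, and let ε > 0 and D' > 0 be reals. Define rounded edge weights by w'(e) = ⌈2h·w(e)/(ε·D')⌉ for every edge e of G. If u and v are vertices with dist^h_{G,w}(u,v) ≤ D', then dist_{G,w'}(u,v) ≤ (1 + 2/ε)·h. -/
open SimpleGraph
open scoped ENNReal

noncomputable section

/-- The weight of a walk: the sum of the weights of its edges (with multiplicity). -/
def walkWeight {V : Type*} {G : SimpleGraph V} (w : Sym2 V → ℝ) {u v : V}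
    (p : G.Walk u v) : ℝ :=
  (p.edges.map w).sum

/-- The distance between `u` and `v`: the minimum weight of a `u`–`v` walk (`∞` if none). -/
def wdist {V : Type*} (G : SimpleGraph V) (w : Sym2 V → ℝ) (u v : V) : ℝ≥0∞ :=
  ⨅ p : G.Walk u v, ENNReal.ofReal (walkWeight w p)

/-- The `h`-hop distance between `u` and `v`: the minimum weight of a `u`–`v` walk with at
most `h` edges (`∞` if none). -/
def hopDist {V : Type*} (G : SimpleGraph V) (w : Sym2 V → ℝ) (h : ℕ) (u v : V) : ℝ≥0∞ :=
  ⨅ p : {p : G.Walk u v // p.length ≤ h}, ENNReal.ofReal (walkWeight w p.1)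

private lemma list_sum_bound {V : Type*} (c : ℝ) (f g : Sym2 V → ℝ) :
    ∀ l : List (Sym2 V), (∀ e ∈ l, g e ≤ c * f e + 1) →
      (l.map g).sum ≤ c * (l.map f).sum + l.length := by
  intro l
  induction l with
  | nil => simp
  | cons e t ih =>
    intro hl
    have h1 := hl e List.mem_cons_self
    have h2 := ih (fun e' he' => hl e' (List.mem_cons_of_mem _ he'))
    simp only [List.map_cons, List.sum_cons, List.length_cons]
    push_cast
    rw [mul_add]
    linarith

theorem stmt_3 {V : Type*} [Fintype V] (G : SimpleGraph V) (w : Sym2 V → ℝ)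
    (hw : ∀ e ∈ G.edgeSet, 0 < w e)
    (h : ℕ) (hh : 1 ≤ h) (ε D' : ℝ) (hε : 0 < ε) (hD' : 0 < D')
    (w' : Sym2 V → ℝ)
    (hw' : ∀ e ∈ G.edgeSet, w' e = ((⌈2 * (h : ℝ) * w e / (ε * D')⌉ : ℤ) : ℝ))
    (u v : V) (hle : hopDist G w h u v ≤ ENNReal.ofReal D') :
    wdist G w' u v ≤ ENNReal.ofReal ((1 + 2 / ε) * h) := by
  classical
  have hhR : (0:ℝ) < h := by exact_mod_cast Nat.lt_of_lt_of_le Nat.zero_lt_one hh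
  set c : ℝ := 2 * h / (ε * D') with hc
  have hcpos : 0 < c := by positivity
  apply ENNReal.le_of_forall_pos_le_add
  intro η hη _
  set δ : ℝ := (η : ℝ) * ε * D' / (2 * h) with hδ
  have hδpos : 0 < δ := by positivity
  have h1 : hopDist G w h u v < ENNReal.ofReal (D' + δ) :=
    lt_of_le_of_lt hle (by
      rw [ENNReal.ofReal_lt_ofReal_iff (by linarith)]; linarith)
  rw [hopDist, iInf_lt_iff] at h1
  obtain ⟨⟨p, hplen⟩, hp⟩ := h1
  have hedges : ∀ e ∈ p.edges, e ∈ G.edgeSet := fun e he => p.edges_subset_edgeSet he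
  have hwp : walkWeight w p < D' + δ := by
    by_contra hcon
    push_neg at hcon
    exact absurd hp (not_lt.mpr (ENNReal.ofReal_le_ofReal hcon))
  have hbound : walkWeight w' p ≤ c * walkWeight w p + p.length := by
    rw [walkWeight, walkWeight, ← p.length_edges]
    apply list_sum_bound
    intro e he
    rw [hw' e (hedges e he)]
    have hceil : ((⌈2 * (h : ℝ) * w e / (ε * D')⌉ : ℤ) : ℝ) < 2 * (h:ℝ) * w e / (ε * D') + 1 :=
      Int.ceil_lt_add_one _
    have : c * w e = 2 * (h:ℝ) * w e / (ε * D') := by rw [hc]; ring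
    linarith
  have hlenR : (p.length : ℝ) ≤ h := by exact_mod_cast hplen
  have hfinal : walkWeight w' p ≤ (1 + 2 / ε) * h + η := by
    have hkey : c * (D' + δ) + h = (1 + 2 / ε) * h + η := by
      rw [hc, hδ]
      field_simp
      ring
    have : c * walkWeight w p ≤ c * (D' + δ) := by
      apply mul_le_mul_of_nonneg_left hwp.le hcpos.le
    linarith
  have hw1 : wdist G w' u v ≤ ENNReal.ofReal (walkWeight w' p) := iInf_le _ p
  refine hw1.trans ?_
  calc ENNReal.ofReal (walkWeight w' p)
      ≤ ENNReal.ofReal ((1 + 2 / ε) * h + η) := ENNReal.ofReal_le_ofReal hfinal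
    _ = ENNReal.ofReal ((1 + 2 / ε) * h) + ENNReal.ofReal (η:ℝ) := by
        rw [ENNReal.ofReal_add (by positivity) η.coe_nonneg]
    _ = ENNReal.ofReal ((1 + 2 / ε) * h) + η := by rw [ENNReal.ofReal_coe_nnreal]
end
end

section
/- Let (G,w) be a finite weighted graph with positive real edge weights, let h ≥ 1 be an integer, and let ε > 0 and D' > 0 be reals. Define rounded edge weights by w'(e) = ⌈2h·w(e)/(ε·D')⌉ for every edge e of G. If u and v are vertices with D'/2 ≤ dist^h_{G,w}(u,v) ≤ D', then (ε·D'/(2h))·dist_{G,w'}(u,v) ≤ (1+ε)·dist^h_{G,w}(u,v). -/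
open SimpleGraph
open scoped ENNReal

noncomputable section

lemma walk_aux {V : Type*} {G : SimpleGraph V} (w w' : Sym2 V → ℝ) (c : ℝ)
    (hE : ∀ e ∈ G.edgeSet, c * w' e ≤ w e + c) {u v : V} (p : G.Walk u v) :
    c * walkWeight w' p ≤ walkWeight w p + c * p.length := by
  induction p with
  | nil => simp [walkWeight]
  | cons ha q ih =>
    have he := hE _ ((SimpleGraph.mem_edgeSet _).mpr ha)
    simp only [walkWeight, SimpleGraph.Walk.edges_cons, List.map_cons, List.sum_cons,
      SimpleGraph.Walk.length_cons, Nat.cast_add, Nat.cast_one] at *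
    nlinarith [ih, he]

theorem stmt_4 {V : Type*} [Fintype V] (G : SimpleGraph V) (w : Sym2 V → ℝ)
    (hw : ∀ e ∈ G.edgeSet, 0 < w e)
    (h : ℕ) (hh : 1 ≤ h) (ε D' : ℝ) (hε : 0 < ε) (hD' : 0 < D')
    (w' : Sym2 V → ℝ)
    (hw' : ∀ e ∈ G.edgeSet, w' e = ((⌈2 * (h : ℝ) * w e / (ε * D')⌉ : ℤ) : ℝ))
    (u v : V) (hlow : ENNReal.ofReal (D' / 2) ≤ hopDist G w h u v)
    (hhigh : hopDist G w h u v ≤ ENNReal.ofReal D') :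
    ENNReal.ofReal (ε * D' / (2 * h)) * wdist G w' u v ≤
      ENNReal.ofReal (1 + ε) * hopDist G w h u v := by
  set c : ℝ := ε * D' / (2 * h) with hc_def
  have hhp : (0 : ℝ) < h := by exact_mod_cast Nat.lt_of_lt_of_le Nat.zero_lt_one hh
  have hc : 0 < c := by positivity
  by_cases hfin : hopDist G w h u v = ⊤
  · rw [hfin, ENNReal.mul_top (by simp [ENNReal.ofReal_eq_zero]; linarith)]
    exact le_top
  -- edgewise inequality
  have hE : ∀ e ∈ G.edgeSet, c * w' e ≤ w e + c := by
    intro e he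
    rw [hw' e he]
    have hceil : ((⌈2 * (h : ℝ) * w e / (ε * D')⌉ : ℤ) : ℝ) ≤
        2 * (h : ℝ) * w e / (ε * D') + 1 := le_of_lt (Int.ceil_lt_add_one _)
    have key : c * (2 * (h : ℝ) * w e / (ε * D') + 1) = w e + c := by
      rw [hc_def]; field_simp
    calc c * ((⌈2 * (h : ℝ) * w e / (ε * D')⌉ : ℤ) : ℝ)
        ≤ c * (2 * (h : ℝ) * w e / (ε * D') + 1) := by
          exact mul_le_mul_of_nonneg_left hceil hc.le
      _ = w e + c := key
  have hch : c * h = ε * D' / 2 := by rw [hc_def]; field_simp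
  -- main step
  have h1 : ENNReal.ofReal c * wdist G w' u v ≤
      hopDist G w h u v + ENNReal.ofReal (ε * D' / 2) := by
    rw [hopDist, ENNReal.iInf_add]
    refine le_iInf fun p => ?_
    calc ENNReal.ofReal c * wdist G w' u v
        ≤ ENNReal.ofReal c * ENNReal.ofReal (walkWeight w' p.1) := by
          exact mul_le_mul_right (iInf_le _ p.1) _
      _ = ENNReal.ofReal (c * walkWeight w' p.1) := (ENNReal.ofReal_mul hc.le).symm
      _ ≤ ENNReal.ofReal (walkWeight w p.1 + ε * D' / 2) := by
          apply ENNReal.ofReal_le_ofReal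
          have h2 := walk_aux w w' c hE p.1
          have h3 : c * (p.1.length : ℝ) ≤ c * h := by
            apply mul_le_mul_of_nonneg_left _ hc.le
            exact_mod_cast p.2
          linarith [hch ▸ h3]
      _ ≤ ENNReal.ofReal (walkWeight w p.1) + ENNReal.ofReal (ε * D' / 2) :=
          ENNReal.ofReal_add_le
  -- conclude
  have h2 : ENNReal.ofReal (ε * D' / 2) ≤ ENNReal.ofReal ε * hopDist G w h u v := by
    have : ENNReal.ofReal (ε * D' / 2) = ENNReal.ofReal ε * ENNReal.ofReal (D' / 2) := by
      rw [← ENNReal.ofReal_mul hε.le]; ring_nf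
    rw [this]
    exact mul_le_mul_right hlow _
  calc ENNReal.ofReal c * wdist G w' u v
      ≤ hopDist G w h u v + ENNReal.ofReal (ε * D' / 2) := h1
    _ ≤ hopDist G w h u v + ENNReal.ofReal ε * hopDist G w h u v := add_le_add_right h2 _
    _ = ENNReal.ofReal (1 + ε) * hopDist G w h u v := by
        rw [ENNReal.ofReal_add zero_le_one hε.le, add_mul, ENNReal.ofReal_one, one_mul]
end
end

section
/- Let (G,w) be a finite weighted graph with positive integer edge weights, let h ≥ 1 be an integer, and let ε > 0. For each natural number i set D'_i = 2^i and define rounded edge weights w'_i(e) = ⌈2h·w(e)/(ε·D'_i)⌉ for every edge e of G. Let u ≠ v be vertices with dist^h_{G,w}(u,v) < ∞. Then the index set I = { i ∈ ℕ : dist_{G,w'_i}(u,v) ≤ (1+2/ε)·h } is nonempty, and the quantity t := inf_{i ∈ I} (ε·D'_i/(2h))·dist_{G,w'_i}(u,v) satisfies dist_{G,w}(u,v) ≤ t ≤ (1+ε)·dist^h_{G,w}(u,v). -/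
open SimpleGraph
open scoped ENNReal

noncomputable section

private lemma sum_aux1 {α : Type*} (f g : α → ℝ) (c : ℝ) :
    ∀ l : List α, (∀ a ∈ l, f a ≤ c * g a) →
      (l.map f).sum ≤ c * (l.map g).sum
  | [], _ => by simp
  | a :: l, hl => by
    simp only [List.map_cons, List.sum_cons]
    have h1 := hl a List.mem_cons_self
    have h2 := sum_aux1 f g c l (fun b hb => hl b (List.mem_cons_of_mem a hb))
    nlinarith [h1, h2]

private lemma sum_aux2 {α : Type*} (f g : α → ℝ) (c : ℝ) :
    ∀ l : List α, (∀ a ∈ l, f a ≤ c * g a + 1) →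
      (l.map f).sum ≤ c * (l.map g).sum + l.length
  | [], _ => by simp
  | a :: l, hl => by
    simp only [List.map_cons, List.sum_cons, List.length_cons]
    have h1 := hl a List.mem_cons_self
    have h2 := sum_aux2 f g c l (fun b hb => hl b (List.mem_cons_of_mem a hb))
    push_cast
    nlinarith [h1, h2]

private lemma natSum_eq {V : Type*} {G : SimpleGraph V} (w : Sym2 V → ℕ) {u v : V}
    (p : G.Walk u v) :
    walkWeight (fun e => (w e : ℝ)) p = (((p.edges.map w).sum : ℕ) : ℝ) := by
  rw [walkWeight, Nat.cast_list_sum, List.map_map]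
  rfl

theorem stmt_5 {V : Type*} [Fintype V] (G : SimpleGraph V) (w : Sym2 V → ℕ)
    (hw : ∀ e ∈ G.edgeSet, 0 < w e)
    (h : ℕ) (hh : 1 ≤ h) (ε : ℝ) (hε : 0 < ε)
    (w' : ℕ → Sym2 V → ℝ)
    (hw' : ∀ i : ℕ, ∀ e ∈ G.edgeSet,
      w' i e = ((⌈2 * (h : ℝ) * (w e : ℝ) / (ε * 2 ^ i)⌉ : ℤ) : ℝ))
    (u v : V) (huv : u ≠ v)
    (hfin : hopDist G (fun e => (w e : ℝ)) h u v < ⊤) :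
    {i : ℕ | wdist G (w' i) u v ≤ ENNReal.ofReal ((1 + 2 / ε) * h)}.Nonempty ∧
    wdist G (fun e => (w e : ℝ)) u v ≤
      (⨅ i ∈ {i : ℕ | wdist G (w' i) u v ≤ ENNReal.ofReal ((1 + 2 / ε) * h)},
        ENNReal.ofReal (ε * 2 ^ i / (2 * h)) * wdist G (w' i) u v) ∧
    (⨅ i ∈ {i : ℕ | wdist G (w' i) u v ≤ ENNReal.ofReal ((1 + 2 / ε) * h)},
        ENNReal.ofReal (ε * 2 ^ i / (2 * h)) * wdist G (w' i) u v) ≤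
      ENNReal.ofReal (1 + ε) * hopDist G (fun e => (w e : ℝ)) h u v := by
  classical
  have hhr : (1:ℝ) ≤ (h:ℝ) := by exact_mod_cast hh
  have hh0 : (0:ℝ) < (h:ℝ) := by linarith
  -- there is a walk of length ≤ h
  have hne : Nonempty {p : G.Walk u v // p.length ≤ h} := by
    by_contra hc
    rw [not_nonempty_iff] at hc
    rw [hopDist, iInf_of_empty] at hfin
    exact absurd rfl hfin.ne
  set N : {p : G.Walk u v // p.length ≤ h} → ℕ := fun p => (p.1.edges.map w).sum with hNdef
  have hSne : (Set.range N).Nonempty := Set.range_nonempty N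
  obtain ⟨q, hq⟩ := Nat.sInf_mem hSne
  set W : ℕ := sInf (Set.range N) with hWdef
  -- hopDist equals W
  have hhd : hopDist G (fun e => ((w e : ℕ) : ℝ)) h u v = (W : ℝ≥0∞) := by
    apply le_antisymm
    · refine iInf_le_of_le q ?_
      rw [natSum_eq]
      rw [show (q.1.edges.map w).sum = W from hq]
      simp
    · refine le_iInf fun p => ?_
      rw [natSum_eq]
      rw [ENNReal.ofReal_natCast]
      have hle : W ≤ N p := Nat.sInf_le (Set.mem_range_self p)
      exact_mod_cast hle
  -- W ≥ 1
  have hW1 : 1 ≤ W := by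
    rw [← hq]
    obtain ⟨p, hp⟩ := q
    cases p with
    | nil => exact absurd rfl huv
    | @cons _ x _ a p' =>
      have he : s(u, x) ∈ G.edgeSet := a
      have h1 : 0 < w s(u, x) := hw _ he
      simp only [hNdef, SimpleGraph.Walk.edges_cons, List.map_cons, List.sum_cons]
      omega
  -- choose the scale
  set i : ℕ := Nat.clog 2 W with hidef
  have hi1 : W ≤ 2 ^ i := Nat.le_pow_clog one_lt_two W
  have hi2 : 2 ^ i ≤ 2 * W := by
    rcases eq_or_lt_of_le hW1 with h1 | h1
    · rw [hidef, ← h1, Nat.clog_one_right]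
      norm_num
    · have hpos : 0 < i := Nat.clog_pos one_lt_two h1
      have hlt : 2 ^ (i - 1) < W := by
        have := Nat.pow_pred_clog_lt_self one_lt_two h1
        simpa [hidef, Nat.pred_eq_sub_one] using this
      have h2 : 2 ^ i = 2 * 2 ^ (i - 1) := by
        rw [← pow_succ']
        congr 1
        omega
      omega
  -- real versions
  have hWr1 : (1:ℝ) ≤ (W:ℝ) := by exact_mod_cast hW1
  have hir1 : (W:ℝ) ≤ 2 ^ i := by exact_mod_cast hi1
  have hir2 : (2:ℝ) ^ i ≤ 2 * W := by exact_mod_cast hi2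
  have hp2 : (0:ℝ) < 2 ^ i := by positivity
  -- edgewise facts
  have hedge_low : ∀ j : ℕ, ∀ e ∈ G.edgeSet,
      ((w e : ℕ) : ℝ) ≤ (ε * 2 ^ j / (2 * h)) * w' j e := by
    intro j e he
    rw [hw' j e he]
    have hceil : 2 * (h:ℝ) * (w e : ℝ) / (ε * 2 ^ j) ≤ (⌈2 * (h:ℝ) * (w e:ℝ) / (ε * 2 ^ j)⌉ : ℝ) :=
      Int.le_ceil _
    have hc0 : (0:ℝ) ≤ ε * 2 ^ j / (2 * h) := by positivity
    have key : (ε * 2 ^ j / (2 * h)) * (2 * (h:ℝ) * (w e : ℝ) / (ε * 2 ^ j)) = (w e : ℝ) := by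
      field_simp
    nlinarith [mul_le_mul_of_nonneg_left hceil hc0]
  have hedge_up : ∀ j : ℕ, ∀ e ∈ G.edgeSet,
      w' j e ≤ (2 * (h:ℝ) / (ε * 2 ^ j)) * (w e : ℝ) + 1 := by
    intro j e he
    rw [hw' j e he]
    have hceil := Int.ceil_lt_add_one (2 * (h:ℝ) * (w e : ℝ) / (ε * 2 ^ j))
    have : (2 * (h:ℝ) / (ε * 2 ^ j)) * (w e : ℝ) = 2 * (h:ℝ) * (w e : ℝ) / (ε * 2 ^ j) := by
      ring
    linarith
  have hedge_pos : ∀ j : ℕ, ∀ e ∈ G.edgeSet, (0:ℝ) ≤ w' j e := by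
    intro j e he
    rw [hw' j e he]
    have h0 : (0:ℝ) ≤ 2 * (h:ℝ) * (w e : ℝ) / (ε * 2 ^ j) := by positivity
    have := Int.le_ceil (2 * (h:ℝ) * (w e : ℝ) / (ε * 2 ^ j))
    linarith
  -- walk-level lower bound (any walk, any scale)
  have hwalk_low : ∀ j : ℕ, ∀ p : G.Walk u v,
      walkWeight (fun e => ((w e : ℕ):ℝ)) p ≤ (ε * 2 ^ j / (2 * h)) * walkWeight (w' j) p := by
    intro j p
    exact sum_aux1 _ _ _ p.edges fun e he => hedge_low j e (p.edges_subset_edgeSet he)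
  -- walk-level upper bound for the minimizing walk
  have hwalk_up : walkWeight (w' i) q.1 ≤ (2 * (h:ℝ) / (ε * 2 ^ i)) * (W:ℝ) + q.1.length := by
    have := sum_aux2 (w' i) (fun e => ((w e : ℕ):ℝ)) (2 * (h:ℝ) / (ε * 2 ^ i)) q.1.edges
      (fun e he => hedge_up i e (q.1.edges_subset_edgeSet he))
    rw [walkWeight]
    calc (q.1.edges.map (w' i)).sum
        ≤ (2 * (h:ℝ) / (ε * 2 ^ i)) * (q.1.edges.map (fun e => ((w e : ℕ):ℝ))).sum
            + q.1.edges.length := this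
      _ = (2 * (h:ℝ) / (ε * 2 ^ i)) * (W:ℝ) + q.1.length := by
          rw [show (q.1.edges.map (fun e => ((w e : ℕ):ℝ))).sum
              = (((q.1.edges.map w).sum : ℕ) : ℝ) from natSum_eq w q.1,
            show (q.1.edges.map w).sum = W from hq, q.1.length_edges]
  have hlen : (q.1.length : ℝ) ≤ (h : ℝ) := by exact_mod_cast q.2
  -- i is in the index set
  have hiI : wdist G (w' i) u v ≤ ENNReal.ofReal ((1 + 2 / ε) * h) := by
    refine iInf_le_of_le q.1 (ENNReal.ofReal_le_ofReal ?_)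
    have key : (2 * (h:ℝ) / (ε * 2 ^ i)) * (W:ℝ) ≤ 2 * (h:ℝ) / ε := by
      rw [div_mul_eq_mul_div, div_le_div_iff₀ (by positivity) hε]
      have h2 : 2 * (h:ℝ) * (W:ℝ) ≤ 2 * (h:ℝ) * (2:ℝ)^i :=
        mul_le_mul_of_nonneg_left hir1 (by positivity)
      nlinarith [h2]
    have : (1 + 2 / ε) * (h:ℝ) = (h:ℝ) + 2 * (h:ℝ) / ε := by
      field_simp
    rw [this]
    linarith [hwalk_up]
  -- lower bound: wdist ≤ scaled rounded dist, for every scale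
  have claim2 : ∀ j : ℕ,
      wdist G (fun e => ((w e : ℕ):ℝ)) u v
        ≤ ENNReal.ofReal (ε * 2 ^ j / (2 * h)) * wdist G (w' j) u v := by
    intro j
    have hc0 : (0:ℝ) < ε * 2 ^ j / (2 * h) := by positivity
    rw [wdist, wdist, ENNReal.mul_iInf' (fun habs => absurd habs ENNReal.ofReal_ne_top)
      (fun h0 => absurd h0 (ne_of_gt (ENNReal.ofReal_pos.2 hc0)))]
    refine le_iInf fun p => iInf_le_of_le p ?_
    rw [← ENNReal.ofReal_mul hc0.le]
    exact ENNReal.ofReal_le_ofReal (hwalk_low j p)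
  -- upper bound at scale i
  have hreal3 : (ε * 2 ^ i / (2 * h)) * walkWeight (w' i) q.1 ≤ (1 + ε) * (W:ℝ) := by
    have hc0 : (0:ℝ) ≤ ε * 2 ^ i / (2 * h) := by positivity
    have h1 : (ε * 2 ^ i / (2 * h)) * walkWeight (w' i) q.1
        ≤ (ε * 2 ^ i / (2 * h)) * ((2 * (h:ℝ) / (ε * 2 ^ i)) * (W:ℝ) + q.1.length) := by
      exact mul_le_mul_of_nonneg_left (hwalk_up) hc0
    have h2 : (ε * 2 ^ i / (2 * h)) * ((2 * (h:ℝ) / (ε * 2 ^ i)) * (W:ℝ) + (q.1.length:ℝ))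
        ≤ (W:ℝ) + ε * (2:ℝ)^i / 2 := by
      have e1 : (ε * 2 ^ i / (2 * h)) * ((2 * (h:ℝ) / (ε * 2 ^ i)) * (W:ℝ)) = (W:ℝ) := by
        field_simp
      have e2 : (ε * 2 ^ i / (2 * h)) * (q.1.length : ℝ) ≤ ε * (2:ℝ)^i / 2 := by
        rw [div_mul_eq_mul_div, div_le_div_iff₀ (by positivity) (by norm_num : (0:ℝ) < 2)]
        have hlen2 : ε * 2 ^ i * (q.1.length:ℝ) ≤ ε * 2 ^ i * (h:ℝ) :=
          mul_le_mul_of_nonneg_left hlen (by positivity)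
        nlinarith [hlen2]
      calc (ε * 2 ^ i / (2 * h)) * ((2 * (h:ℝ) / (ε * 2 ^ i)) * (W:ℝ) + (q.1.length:ℝ))
          = (ε * 2 ^ i / (2 * h)) * ((2 * (h:ℝ) / (ε * 2 ^ i)) * (W:ℝ))
            + (ε * 2 ^ i / (2 * h)) * (q.1.length:ℝ) := by ring
        _ ≤ (W:ℝ) + ε * (2:ℝ)^i / 2 := by rw [e1]; linarith
    have h3 : ε * (2:ℝ)^i / 2 ≤ ε * (W:ℝ) := by nlinarith
    calc (ε * 2 ^ i / (2 * h)) * walkWeight (w' i) q.1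
        ≤ (W:ℝ) + ε * (2:ℝ)^i / 2 := le_trans h1 h2
      _ ≤ (W:ℝ) + ε * (W:ℝ) := by linarith
      _ = (1 + ε) * (W:ℝ) := by ring
  refine ⟨⟨i, hiI⟩, le_iInf₂ fun j _ => claim2 j, ?_⟩
  calc (⨅ j ∈ {j : ℕ | wdist G (w' j) u v ≤ ENNReal.ofReal ((1 + 2 / ε) * h)},
        ENNReal.ofReal (ε * 2 ^ j / (2 * h)) * wdist G (w' j) u v)
      ≤ ENNReal.ofReal (ε * 2 ^ i / (2 * h)) * wdist G (w' i) u v := iInf₂_le i hiI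
    _ ≤ ENNReal.ofReal (ε * 2 ^ i / (2 * h)) * ENNReal.ofReal (walkWeight (w' i) q.1) :=
        mul_le_mul_right (iInf_le _ q.1) _
    _ = ENNReal.ofReal ((ε * 2 ^ i / (2 * h)) * walkWeight (w' i) q.1) :=
        (ENNReal.ofReal_mul (by positivity)).symm
    _ ≤ ENNReal.ofReal ((1 + ε) * (W:ℝ)) := ENNReal.ofReal_le_ofReal hreal3
    _ = ENNReal.ofReal (1 + ε) * (W : ℝ≥0∞) := by
        rw [ENNReal.ofReal_mul (by positivity)]
        simp
    _ = ENNReal.ofReal (1 + ε) * hopDist G (fun e => ((w e : ℕ):ℝ)) h u v := by rw [hhd]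
end
end

section
/- Let (G,w) be a connected finite weighted graph on n vertices with positive real edge weights, let k be an integer with 1 ≤ k ≤ n−1, and for each vertex u let S(u) be a set of k nearest vertices to u. Let (G',w') be the k-shortcut graph of (G,w). Then dist_{G',w'}(u,v) = dist_{G,w}(u,v) for all vertices u,v, and for every pair of vertices u,v there is a u–v walk in G' whose w'-weight equals dist_{G',w'}(u,v) and which has fewer than 4n/k edges. -/
open SimpleGraph
open scoped ENNReal

noncomputable section

section SG6Lib

variable {V : Type*} {H : SimpleGraph V} {ω : Sym2 V → ℝ}

@[simp] lemma SG6.walkWeight_nil {u : V} : walkWeight ω (SimpleGraph.Walk.nil : H.Walk u u) = 0 := by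
  simp [walkWeight]

@[simp] lemma SG6.walkWeight_cons {a b c : V} (h : H.Adj a b) (p : H.Walk b c) :
    walkWeight ω (SimpleGraph.Walk.cons h p) = ω s(a, b) + walkWeight ω p := by
  simp [walkWeight]

lemma SG6.walkWeight_append {a b c : V} (p : H.Walk a b) (q : H.Walk b c) :
    walkWeight ω (p.append q) = walkWeight ω p + walkWeight ω q := by
  simp [walkWeight, SimpleGraph.Walk.edges_append]

lemma SG6.walkWeight_nonneg (hω : ∀ e ∈ H.edgeSet, 0 ≤ ω e) {a b : V} (p : H.Walk a b) :
    0 ≤ walkWeight ω p := by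
  refine List.sum_nonneg ?_
  intro x hx
  obtain ⟨e, he, rfl⟩ := List.mem_map.1 hx
  exact hω e (p.edges_subset_edgeSet he)

lemma SG6.wdist_le {a b : V} (p : H.Walk a b) :
    wdist H ω a b ≤ ENNReal.ofReal (walkWeight ω p) :=
  iInf_le _ p

@[simp] lemma SG6.wdist_self (a : V) : wdist H ω a a = 0 :=
  le_antisymm (by simpa using SG6.wdist_le (SimpleGraph.Walk.nil : H.Walk a a)) zero_le

lemma SG6.wdist_symm (a b : V) : wdist H ω a b = wdist H ω b a := by
  have key : ∀ x y : V, wdist H ω x y ≤ wdist H ω y x := by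
    intro x y
    refine le_iInf fun p => ?_
    refine (SG6.wdist_le p.reverse).trans (le_of_eq ?_)
    simp [walkWeight, SimpleGraph.Walk.edges_reverse, List.sum_reverse]
  exact le_antisymm (key a b) (key b a)

lemma SG6.wdist_triangle (a b c : V) :
    wdist H ω a c ≤ wdist H ω a b + wdist H ω b c := by
  conv_rhs => rw [wdist, wdist]
  rw [ENNReal.iInf_add]
  refine le_iInf fun p => ?_
  rw [ENNReal.add_iInf]
  refine le_iInf fun q => ?_
  refine (SG6.wdist_le (p.append q)).trans ?_
  rw [SG6.walkWeight_append]
  exact ENNReal.ofReal_add_le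

lemma SG6.wdist_le_edge {a b : V} (h : H.Adj a b) :
    wdist H ω a b ≤ ENNReal.ofReal (ω s(a, b)) := by
  simpa using SG6.wdist_le (SimpleGraph.Walk.cons h SimpleGraph.Walk.nil)

lemma SG6.wdist_ne_top {a b : V} (h : H.Reachable a b) : wdist H ω a b ≠ ⊤ := by
  obtain ⟨p⟩ := h
  exact ne_top_of_le_ne_top ENNReal.ofReal_ne_top (SG6.wdist_le p)

lemma SG6.exists_path_le (hω : ∀ e ∈ H.edgeSet, 0 ≤ ω e) {a b : V} (p : H.Walk a b) :
    ∃ q : H.Walk a b, q.IsPath ∧ walkWeight ω q ≤ walkWeight ω p ∧ q.length ≤ p.length := by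
  classical
  induction p with
  | nil => exact ⟨SimpleGraph.Walk.nil, by simp⟩
  | @cons a b' c h p ih =>
    obtain ⟨q, hq, hle, hlen⟩ := ih
    by_cases hu : a ∈ q.support
    · refine ⟨q.dropUntil a hu, hq.dropUntil hu, ?_, ?_⟩
      · have hsplit : walkWeight ω q
            = walkWeight ω (q.takeUntil a hu) + walkWeight ω (q.dropUntil a hu) := by
          conv_lhs => rw [← q.take_spec hu]
          exact SG6.walkWeight_append _ _
        have h1 : 0 ≤ walkWeight ω (q.takeUntil a hu) := SG6.walkWeight_nonneg hω _
        have h2 : 0 ≤ ω s(a, b') := hω _ (H.mem_edgeSet.2 h)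
        simp only [SG6.walkWeight_cons]
        linarith
      · calc (q.dropUntil a hu).length ≤ q.length := q.length_dropUntil_le hu
          _ ≤ p.length := hlen
          _ ≤ (SimpleGraph.Walk.cons h p).length := by simp [SimpleGraph.Walk.length_cons]
    · refine ⟨SimpleGraph.Walk.cons h q, hq.cons hu, ?_, ?_⟩
      · simp only [SG6.walkWeight_cons]
        linarith
      · simpa [SimpleGraph.Walk.length_cons] using hlen

lemma SG6.exists_walk_eq_wdist [Fintype V] (hω : ∀ e ∈ H.edgeSet, 0 ≤ ω e) {a b : V}
    (h : H.Reachable a b) :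
    ∃ p : H.Walk a b, ENNReal.ofReal (walkWeight ω p) = wdist H ω a b := by
  classical
  obtain ⟨p0⟩ := h
  have hne : Nonempty {p : H.Walk a b // p.length < Fintype.card V} :=
    ⟨⟨p0.bypass, p0.bypass_isPath.length_lt⟩⟩
  obtain ⟨pm, hpm⟩ := Finite.exists_min
    (fun p : {p : H.Walk a b // p.length < Fintype.card V} =>
      ENNReal.ofReal (walkWeight ω p.1))
  refine ⟨pm.1, le_antisymm ?_ (SG6.wdist_le _)⟩
  refine le_iInf fun r => ?_
  obtain ⟨q, hq, hle, _⟩ := SG6.exists_path_le hω r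
  calc ENNReal.ofReal (walkWeight ω pm.1)
      ≤ ENNReal.ofReal (walkWeight ω q) := hpm ⟨q, hq.length_lt⟩
    _ ≤ ENNReal.ofReal (walkWeight ω r) := ENNReal.ofReal_le_ofReal hle

lemma SG6.wdist_pos [Fintype V] (hω : ∀ e ∈ H.edgeSet, 0 < ω e) {a b : V} (hab : a ≠ b) :
    0 < wdist H ω a b := by
  by_cases h : H.Reachable a b
  · obtain ⟨p, hp⟩ := SG6.exists_walk_eq_wdist (fun e he => (hω e he).le) h
    rw [← hp]
    cases p with
    | nil => exact absurd rfl hab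
    | cons hadj q =>
      have h1 : 0 < ω _ := hω _ (H.mem_edgeSet.2 hadj)
      have h2 : 0 ≤ walkWeight ω q := SG6.walkWeight_nonneg (fun e he => (hω e he).le) q
      rw [SG6.walkWeight_cons]
      exact ENNReal.ofReal_pos.2 (by linarith)
  · have : IsEmpty (H.Walk a b) := ⟨fun p => h ⟨p⟩⟩
    rw [wdist, iInf_of_empty]
    norm_num

end SG6Lib

section SG6Lib2
variable {V : Type*} {H : SimpleGraph V}

namespace SG6

/-- Prefix of a walk with `i` edges. -/
def takeW : ∀ {a b : V} (p : H.Walk a b) (i : ℕ), H.Walk a (p.getVert i)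
  | _, _, .nil, _ => .nil
  | _, _, .cons _ _, 0 => .nil
  | _, _, .cons h q, (i+1) => .cons h (takeW q i)

/-- Suffix of a walk after `i` edges. -/
def dropW : ∀ {a b : V} (p : H.Walk a b) (i : ℕ), H.Walk (p.getVert i) b
  | _, _, .nil, _ => .nil
  | _, _, .cons h q, 0 => .cons h q
  | _, _, .cons _ q, (i+1) => dropW q i

lemma edges_takeW_dropW : ∀ {a b : V} (p : H.Walk a b) (i : ℕ),
    (takeW p i).edges ++ (dropW p i).edges = p.edges
  | _, _, .nil, _ => by simp [takeW, dropW]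
  | _, _, .cons h q, 0 => by simp [takeW, dropW]; rfl
  | _, _, .cons h q, (i+1) => by
      simp [takeW, dropW, SimpleGraph.Walk.edges_cons, edges_takeW_dropW q i]

lemma length_takeW : ∀ {a b : V} (p : H.Walk a b) (i : ℕ), i ≤ p.length →
    (takeW p i).length = i
  | _, _, .nil, i, hi => by simpa [takeW] using (Nat.le_zero.1 (by simpa using hi)).symm
  | _, _, .cons h q, 0, _ => by simp [takeW]; rfl
  | _, _, .cons h q, (i+1), hi => by
      have : i ≤ q.length := by simpa [SimpleGraph.Walk.length_cons] using hi
      simp [takeW, SimpleGraph.Walk.length_cons, length_takeW q i this]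

lemma length_dropW : ∀ {a b : V} (p : H.Walk a b) (i : ℕ),
    (dropW p i).length = p.length - i
  | _, _, .nil, i => by simp [dropW]
  | _, _, .cons h q, 0 => by simp [dropW]; rfl
  | _, _, .cons h q, (i+1) => by
      simp [dropW, SimpleGraph.Walk.length_cons, length_dropW q i]

lemma getVert_dropW : ∀ {a b : V} (p : H.Walk a b) (i m : ℕ),
    (dropW p i).getVert m = p.getVert (i + m)
  | _, _, .nil, i, m => rfl
  | _, _, .cons h q, 0, m => by simp [dropW]; rfl
  | _, _, .cons h q, (i+1), m => by
      rw [show i + 1 + m = (i + m) + 1 by omega]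
      simpa [dropW, SimpleGraph.Walk.getVert_cons_succ] using getVert_dropW q i m

lemma walkWeight_takeW_dropW {ω : Sym2 V → ℝ} {a b : V} (p : H.Walk a b) (i : ℕ) :
    walkWeight ω (takeW p i) + walkWeight ω (dropW p i) = walkWeight ω p := by
  simp only [walkWeight]
  rw [← edges_takeW_dropW p i, List.map_append, List.sum_append]

lemma walkWeight_copy {ω : Sym2 V → ℝ} {a b a' b' : V} (p : H.Walk a b)
    (ha : a = a') (hb : b = b') :
    walkWeight ω (p.copy ha hb) = walkWeight ω p := by
  subst ha; subst hb; rw [SimpleGraph.Walk.copy_rfl_rfl]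

/-- sandwich lemma in `ℝ≥0∞`. -/
lemma sandwich {x y a b : ℝ≥0∞} (hx : x ≤ a) (hy : y ≤ b) (hs : a + b ≤ x + y)
    (ha : a ≠ ⊤) (hb : b ≠ ⊤) : x = a ∧ y = b := by
  have hyt : y ≠ ⊤ := fun h => hb (top_le_iff.1 (h ▸ hy))
  have hxt : x ≠ ⊤ := fun h => ha (top_le_iff.1 (h ▸ hx))
  constructor
  · by_contra hne
    have hlt : x < a := lt_of_le_of_ne hx hne
    have : x + y < a + b := ENNReal.add_lt_add_of_lt_of_le hyt hlt hy
    exact absurd hs (not_le.2 this)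
  · by_contra hne
    have hlt : y < b := lt_of_le_of_ne hy hne
    have : x + y < a + b := by
      calc x + y = y + x := add_comm _ _
        _ < b + a := ENNReal.add_lt_add_of_lt_of_le hxt hlt hx
        _ = a + b := add_comm _ _
    exact absurd hs (not_le.2 this)

end SG6
end SG6Lib2

section SG6Part1
variable {V : Type*} [Fintype V]

lemma SG6.part1 (G : SimpleGraph V) (w : Sym2 V → ℝ)
    (hw : ∀ e ∈ G.edgeSet, 0 < w e) (hconn : G.Connected)
    (S : V → Finset V)
    (G' : SimpleGraph V)
    (hG' : ∀ a b : V, G'.Adj a b ↔ (G.Adj a b ∨ b ∈ S a ∨ a ∈ S b))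
    (w' : Sym2 V → ℝ)
    (hw'short : ∀ a b : V, G'.Adj a b → (b ∈ S a ∨ a ∈ S b) →
      w' s(a, b) = (wdist G w a b).toReal)
    (hw'old : ∀ a b : V, G'.Adj a b → ¬(b ∈ S a ∨ a ∈ S b) →
      w' s(a, b) = w s(a, b)) :
    ∀ u v : V, wdist G' w' u v = wdist G w u v := by
  have hGle : G ≤ G' := fun {a b} h => (hG' a b).2 (Or.inl h)
  have key2 : ∀ a b : V, G.Adj a b → w' s(a, b) ≤ w s(a, b) := by
    intro a b h
    by_cases hsc : b ∈ S a ∨ a ∈ S b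
    · rw [hw'short a b (hGle h) hsc]
      have h1 : wdist G w a b ≤ ENNReal.ofReal (w s(a, b)) := SG6.wdist_le_edge h
      have h2 : 0 ≤ w s(a, b) := (hw _ (G.mem_edgeSet.2 h)).le
      calc (wdist G w a b).toReal
          ≤ (ENNReal.ofReal (w s(a, b))).toReal :=
            ENNReal.toReal_mono ENNReal.ofReal_ne_top h1
        _ = w s(a, b) := ENNReal.toReal_ofReal h2
    · rw [hw'old a b (hGle h) hsc]
  have key1 : ∀ a b : V, G'.Adj a b → wdist G w a b ≤ ENNReal.ofReal (w' s(a, b)) := by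
    intro a b h
    by_cases hsc : b ∈ S a ∨ a ∈ S b
    · rw [hw'short a b h hsc,
        ENNReal.ofReal_toReal (SG6.wdist_ne_top (hconn.preconnected a b))]
    · rw [hw'old a b h hsc]
      exact SG6.wdist_le_edge (((hG' a b).1 h).resolve_right hsc)
  have hw'0 : ∀ e ∈ G'.edgeSet, 0 ≤ w' e := by
    intro e he
    induction e with
    | _ a b =>
      have h : G'.Adj a b := G'.mem_edgeSet.1 he
      by_cases hsc : b ∈ S a ∨ a ∈ S b
      · rw [hw'short a b h hsc]; exact ENNReal.toReal_nonneg
      · rw [hw'old a b h hsc]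
        exact (hw _ (G.mem_edgeSet.2 (((hG' a b).1 h).resolve_right hsc))).le
  intro u v
  refine le_antisymm ?_ ?_
  · refine le_iInf fun p => ?_
    refine le_trans (SG6.wdist_le (p.mapLe hGle)) (ENNReal.ofReal_le_ofReal ?_)
    have hed : (p.mapLe hGle).edges = p.edges := by
      have hco : ⇑(SimpleGraph.Hom.ofLE hGle) = id := rfl
      simp [SimpleGraph.Walk.mapLe, SimpleGraph.Walk.edges_map, hco, Sym2.map_id,
        List.map_id]
    simp only [walkWeight, hed]
    refine List.sum_le_sum ?_
    intro e he
    have heE : e ∈ G.edgeSet := p.edges_subset_edgeSet he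
    induction e with
    | _ a b => exact key2 a b (G.mem_edgeSet.1 heE)
  · refine le_iInf fun p => ?_
    clear hconn
    induction p with
    | nil => simp
    | @cons x y z h q ih =>
      calc wdist G w x z ≤ wdist G w x y + wdist G w y z := SG6.wdist_triangle x y z
        _ ≤ ENNReal.ofReal (w' s(x, y)) + ENNReal.ofReal (walkWeight w' q) :=
            add_le_add (key1 x y h) ih
        _ = ENNReal.ofReal (w' s(x, y) + walkWeight w' q) :=
            (ENNReal.ofReal_add (hw'0 _ (G'.mem_edgeSet.2 h))
              (SG6.walkWeight_nonneg hw'0 q)).symm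
        _ = ENNReal.ofReal (walkWeight w' (SimpleGraph.Walk.cons h q)) := by
            rw [SG6.walkWeight_cons]

end SG6Part1

theorem stmt_6 {V : Type*} [Fintype V] (G : SimpleGraph V) (w : Sym2 V → ℝ)
    (hw : ∀ e ∈ G.edgeSet, 0 < w e) (hconn : G.Connected)
    (k : ℕ) (hk1 : 1 ≤ k) (hkn : k ≤ Fintype.card V - 1)
    -- `S u` is a set of `k` nearest vertices to `u`
    (S : V → Finset V)
    (hSnot : ∀ u, u ∉ S u) (hScard : ∀ u, (S u).card = k)
    (hSnear : ∀ u, ∀ y ∈ S u, ∀ y', y' ∉ S u → y' ≠ u →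
      wdist G w u y ≤ wdist G w u y')
    -- `(G', w')` is the `k`-shortcut graph of `(G, w)`
    (G' : SimpleGraph V)
    (hG' : ∀ a b : V, G'.Adj a b ↔ (G.Adj a b ∨ b ∈ S a ∨ a ∈ S b))
    (w' : Sym2 V → ℝ)
    (hw'short : ∀ a b : V, G'.Adj a b → (b ∈ S a ∨ a ∈ S b) →
      w' s(a, b) = (wdist G w a b).toReal)
    (hw'old : ∀ a b : V, G'.Adj a b → ¬(b ∈ S a ∨ a ∈ S b) →
      w' s(a, b) = w s(a, b)) :
    (∀ u v : V, wdist G' w' u v = wdist G w u v) ∧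
    ∀ u v : V, ∃ p : G'.Walk u v,
      ENNReal.ofReal (walkWeight w' p) = wdist G' w' u v ∧
      (p.length : ℝ) < 4 * (Fintype.card V) / k := by
  classical
  have part1 := SG6.part1 G w hw hconn S G' hG' w' hw'short hw'old
  refine ⟨part1, ?_⟩
  intro u v
  have hGle : G ≤ G' := fun {a b} h => (hG' a b).2 (Or.inl h)
  have hconn' : G'.Connected := hconn.mono hGle
  have hw'0 : ∀ e ∈ G'.edgeSet, 0 ≤ w' e := by
    intro e he
    induction e with
    | _ a b =>
      have h : G'.Adj a b := G'.mem_edgeSet.1 he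
      by_cases hsc : b ∈ S a ∨ a ∈ S b
      · rw [hw'short a b h hsc]; exact ENNReal.toReal_nonneg
      · rw [hw'old a b h hsc]
        exact (hw _ (G.mem_edgeSet.2 (((hG' a b).1 h).resolve_right hsc))).le
  have hfin : ∀ a b : V, wdist G w a b ≠ ⊤ :=
    fun a b => SG6.wdist_ne_top (hconn.preconnected a b)
  have hfin' : ∀ a b : V, wdist G' w' a b ≠ ⊤ := fun a b => by rw [part1]; exact hfin a b
  have hpos' : ∀ a b : V, a ≠ b → 0 < wdist G' w' a b := fun a b hab => by
    rw [part1]; exact SG6.wdist_pos hw hab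
  -- the minimum-weight, minimum-length walk Q
  obtain ⟨p0, hp0⟩ := SG6.exists_walk_eq_wdist hw'0 (hconn'.preconnected u v)
  have hexl : ∃ m : ℕ, ∃ p : G'.Walk u v,
      ENNReal.ofReal (walkWeight w' p) = wdist G' w' u v ∧ p.length = m :=
    ⟨p0.length, p0, hp0, rfl⟩
  obtain ⟨Q, hQw, hQl⟩ := Nat.find_spec hexl
  have hQmin : ∀ p : G'.Walk u v,
      ENNReal.ofReal (walkWeight w' p) = wdist G' w' u v → Q.length ≤ p.length :=
    fun p hp => le_trans (le_of_eq hQl) (Nat.find_min' hexl ⟨p, hp, rfl⟩)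
  -- prefix/suffix optimality
  have hDR : ∀ i : ℕ,
      wdist G' w' u (Q.getVert i) = ENNReal.ofReal (walkWeight w' (SG6.takeW Q i)) ∧
      wdist G' w' (Q.getVert i) v = ENNReal.ofReal (walkWeight w' (SG6.dropW Q i)) := by
    intro i
    refine SG6.sandwich (SG6.wdist_le _) (SG6.wdist_le _) ?_ ENNReal.ofReal_ne_top
      ENNReal.ofReal_ne_top
    rw [← ENNReal.ofReal_add (SG6.walkWeight_nonneg hw'0 _) (SG6.walkWeight_nonneg hw'0 _),
      SG6.walkWeight_takeW_dropW, hQw]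
    exact SG6.wdist_triangle u (Q.getVert i) v
  have hDtot : ∀ i : ℕ,
      wdist G' w' u (Q.getVert i) + wdist G' w' (Q.getVert i) v = wdist G' w' u v := by
    intro i
    rw [(hDR i).1, (hDR i).2,
      ← ENNReal.ofReal_add (SG6.walkWeight_nonneg hw'0 _) (SG6.walkWeight_nonneg hw'0 _),
      SG6.walkWeight_takeW_dropW, hQw]
  -- additivity of distances along Q
  have hadd : ∀ i j : ℕ, i ≤ j →
      wdist G' w' u (Q.getVert i) + wdist G' w' (Q.getVert i) (Q.getVert j)
        = wdist G' w' u (Q.getVert j) := by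
    intro i j hij
    refine le_antisymm ?_ ?_
    · have hv : (SG6.dropW Q i).getVert (j - i) = Q.getVert j := by
        rw [SG6.getVert_dropW]; congr 1; omega
      have hA : wdist G' w' (Q.getVert i) (Q.getVert j) ≤
          ENNReal.ofReal (walkWeight w' (SG6.takeW (SG6.dropW Q i) (j - i))) := by
        have h := SG6.wdist_le (ω := w') ((SG6.takeW (SG6.dropW Q i) (j - i)).copy rfl hv)
        rwa [SG6.walkWeight_copy] at h
      have hB : wdist G' w' (Q.getVert j) v ≤
          ENNReal.ofReal (walkWeight w' (SG6.dropW (SG6.dropW Q i) (j - i))) := by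
        have h := SG6.wdist_le (ω := w') ((SG6.dropW (SG6.dropW Q i) (j - i)).copy hv rfl)
        rwa [SG6.walkWeight_copy] at h
      have hsplit2 : ENNReal.ofReal (walkWeight w' (SG6.dropW Q i))
          = ENNReal.ofReal (walkWeight w' (SG6.takeW (SG6.dropW Q i) (j - i)))
            + ENNReal.ofReal (walkWeight w' (SG6.dropW (SG6.dropW Q i) (j - i))) := by
        rw [← ENNReal.ofReal_add (SG6.walkWeight_nonneg hw'0 _)
          (SG6.walkWeight_nonneg hw'0 _), SG6.walkWeight_takeW_dropW]
      have hchain : wdist G' w' u (Q.getVert j) + wdist G' w' (Q.getVert j) v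
          ≥ (wdist G' w' u (Q.getVert i) + wdist G' w' (Q.getVert i) (Q.getVert j))
            + wdist G' w' (Q.getVert j) v := by
        calc (wdist G' w' u (Q.getVert i) + wdist G' w' (Q.getVert i) (Q.getVert j))
              + wdist G' w' (Q.getVert j) v
            = wdist G' w' u (Q.getVert i)
              + (wdist G' w' (Q.getVert i) (Q.getVert j) + wdist G' w' (Q.getVert j) v) := by
              rw [add_assoc]
          _ ≤ wdist G' w' u (Q.getVert i)
              + (ENNReal.ofReal (walkWeight w' (SG6.takeW (SG6.dropW Q i) (j - i)))
                + ENNReal.ofReal (walkWeight w' (SG6.dropW (SG6.dropW Q i) (j - i)))) := by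
              gcongr
          _ = wdist G' w' u (Q.getVert i) + ENNReal.ofReal (walkWeight w' (SG6.dropW Q i)) := by
              rw [hsplit2]
          _ = wdist G' w' u (Q.getVert i) + wdist G' w' (Q.getVert i) v := by rw [(hDR i).2]
          _ = wdist G' w' u v := hDtot i
          _ = wdist G' w' u (Q.getVert j) + wdist G' w' (Q.getVert j) v := (hDtot j).symm
      exact (ENNReal.add_le_add_iff_right (hfin' (Q.getVert j) v)).1 hchain
    · exact SG6.wdist_triangle u (Q.getVert i) (Q.getVert j)
  -- distinctness of the vertices of Q
  have hdist : ∀ i j : ℕ, i < j → j ≤ Q.length → Q.getVert i ≠ Q.getVert j := by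
    intro i j hij hjL heq
    have hNw : ENNReal.ofReal (walkWeight w'
        ((SG6.takeW Q i).append ((SG6.dropW Q j).copy heq.symm rfl))) = wdist G' w' u v := by
      rw [SG6.walkWeight_append, ENNReal.ofReal_add (SG6.walkWeight_nonneg hw'0 _)
        (SG6.walkWeight_nonneg hw'0 _), SG6.walkWeight_copy, ← (hDR i).1, ← (hDR j).2, heq]
      exact hDtot j
    have hlen := hQmin _ hNw
    rw [SimpleGraph.Walk.length_append, SG6.length_takeW Q i (by omega),
      SimpleGraph.Walk.length_copy, SG6.length_dropW] at hlen
    omega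
  have hD_lt : ∀ i j : ℕ, i < j → j ≤ Q.length →
      wdist G' w' u (Q.getVert i) < wdist G' w' u (Q.getVert j) := by
    intro i j hij hjL
    rw [← hadd i j hij.le]
    exact ENNReal.lt_add_right (hfin' u _) (hpos' _ _ (hdist i j hij hjL)).ne'
  -- replacement principle
  have hrepl : ∀ i j : ℕ, i ≤ j → j ≤ Q.length →
      ∀ mid : G'.Walk (Q.getVert i) (Q.getVert j),
      ENNReal.ofReal (walkWeight w' mid) = wdist G' w' (Q.getVert i) (Q.getVert j) →
      i + mid.length + (Q.length - j) < Q.length → False := by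
    intro i j hij hjL mid hmw hlen
    have hNw : ENNReal.ofReal (walkWeight w'
        ((SG6.takeW Q i).append (mid.append (SG6.dropW Q j)))) = wdist G' w' u v := by
      rw [SG6.walkWeight_append, SG6.walkWeight_append,
        ENNReal.ofReal_add (SG6.walkWeight_nonneg hw'0 _)
          (add_nonneg (SG6.walkWeight_nonneg hw'0 _) (SG6.walkWeight_nonneg hw'0 _)),
        ENNReal.ofReal_add (SG6.walkWeight_nonneg hw'0 _) (SG6.walkWeight_nonneg hw'0 _),
        ← (hDR i).1, ← (hDR j).2, hmw, ← add_assoc, hadd i j hij]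
      exact hDtot j
    have h := hQmin _ hNw
    rw [SimpleGraph.Walk.length_append, SimpleGraph.Walk.length_append,
      SG6.length_takeW Q i (by omega), SG6.length_dropW] at h
    omega
  -- no shortcut-set membership at distance ≥ 2 along Q
  have hS4 : ∀ i j : ℕ, i + 2 ≤ j → j ≤ Q.length →
      (Q.getVert j ∈ S (Q.getVert i) ∨ Q.getVert i ∈ S (Q.getVert j)) → False := by
    intro i j hij hjL hmem
    have hadj : G'.Adj (Q.getVert i) (Q.getVert j) := (hG' _ _).2 (Or.inr hmem)
    have hE : ENNReal.ofReal (walkWeight w'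
        (SimpleGraph.Walk.cons hadj SimpleGraph.Walk.nil))
        = wdist G' w' (Q.getVert i) (Q.getVert j) := by
      rw [SG6.walkWeight_cons, SG6.walkWeight_nil, add_zero, hw'short _ _ hadj hmem,
        ENNReal.ofReal_toReal (hfin _ _), part1]
    refine hrepl i j (by omega) hjL _ hE ?_
    simp only [SimpleGraph.Walk.length_cons, SimpleGraph.Walk.length_nil]
    omega
  -- nearest-neighbour radius bound
  have hrad : ∀ i j : ℕ, ∀ s : V, i ≤ Q.length → j ≤ Q.length →
      (i + 2 ≤ j ∨ j + 2 ≤ i) → s ∈ S (Q.getVert i) →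
      wdist G' w' (Q.getVert i) s ≤ wdist G' w' (Q.getVert i) (Q.getVert j) := by
    intro i j s hiL hjL hgap hs
    have hnot : Q.getVert j ∉ S (Q.getVert i) := by
      intro hmem
      rcases hgap with h | h
      · exact hS4 i j h hjL (Or.inl hmem)
      · exact hS4 j i h hiL (Or.inr hmem)
    have hne : Q.getVert j ≠ Q.getVert i := by
      rcases hgap with h | h
      · exact (hdist i j (by omega) hjL).symm
      · exact hdist j i (by omega) hiL
    have h := hSnear (Q.getVert i) s hs (Q.getVert j) hnot hne
    rw [part1, part1]
    exact h
  -- window lemma: memberships of a common vertex are within distance < 4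
  have hwin : ∀ i j : ℕ, ∀ s : V, i + 4 ≤ j → j ≤ Q.length →
      s ∈ S (Q.getVert i) → s ∈ S (Q.getVert j) → False := by
    intro i j s hij hjL hsi hsj
    have hx : wdist G' w' (Q.getVert i) s ≤ wdist G' w' (Q.getVert i) (Q.getVert (i+2)) :=
      hrad i (i+2) s (by omega) (by omega) (Or.inl (by omega)) hsi
    by_cases hj5 : i + 5 ≤ j
    · -- far case: impossible by strict monotonicity
      have hy : wdist G' w' (Q.getVert j) s ≤ wdist G' w' (Q.getVert j) (Q.getVert (j-2)) :=
        hrad j (j-2) s hjL (by omega) (Or.inr (by omega)) hsj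
      have t1 : wdist G' w' (Q.getVert i) (Q.getVert j)
          ≤ wdist G' w' (Q.getVert i) s + wdist G' w' s (Q.getVert j) :=
        SG6.wdist_triangle _ _ _
      have t2 : wdist G' w' s (Q.getVert j) = wdist G' w' (Q.getVert j) s :=
        SG6.wdist_symm _ _
      have t3 : wdist G' w' (Q.getVert j) (Q.getVert (j-2))
          = wdist G' w' (Q.getVert (j-2)) (Q.getVert j) := SG6.wdist_symm _ _
      have hchain : wdist G' w' u (Q.getVert (j-2))
            + wdist G' w' (Q.getVert (j-2)) (Q.getVert j)
          ≤ wdist G' w' u (Q.getVert (i+2))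
            + wdist G' w' (Q.getVert (j-2)) (Q.getVert j) := by
        calc wdist G' w' u (Q.getVert (j-2)) + wdist G' w' (Q.getVert (j-2)) (Q.getVert j)
            = wdist G' w' u (Q.getVert j) := hadd (j-2) j (by omega)
          _ = wdist G' w' u (Q.getVert i) + wdist G' w' (Q.getVert i) (Q.getVert j) :=
              (hadd i j (by omega)).symm
          _ ≤ wdist G' w' u (Q.getVert i)
              + (wdist G' w' (Q.getVert i) s + wdist G' w' s (Q.getVert j)) := by gcongr
          _ ≤ wdist G' w' u (Q.getVert i)
              + (wdist G' w' (Q.getVert i) (Q.getVert (i+2))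
                + wdist G' w' (Q.getVert (j-2)) (Q.getVert j)) := by
              gcongr
              rw [t2, ← t3]
              exact hy
          _ = (wdist G' w' u (Q.getVert i) + wdist G' w' (Q.getVert i) (Q.getVert (i+2)))
              + wdist G' w' (Q.getVert (j-2)) (Q.getVert j) := by rw [add_assoc]
          _ = wdist G' w' u (Q.getVert (i+2))
              + wdist G' w' (Q.getVert (j-2)) (Q.getVert j) := by rw [hadd i (i+2) (by omega)]
      have hle := (ENNReal.add_le_add_iff_right (hfin' _ _)).1 hchain
      exact absurd hle (not_le.2 (hD_lt (i+2) (j-2) (by omega) (by omega)))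
    · have hj4 : j = i + 4 := by omega
      subst hj4
      have hy : wdist G' w' (Q.getVert (i+4)) s
          ≤ wdist G' w' (Q.getVert (i+4)) (Q.getVert (i+2)) :=
        hrad (i+4) (i+2) s hjL (by omega) (Or.inr (by omega)) hsj
      have hAB : wdist G' w' (Q.getVert i) (Q.getVert (i+2))
            + wdist G' w' (Q.getVert (i+2)) (Q.getVert (i+4))
          = wdist G' w' (Q.getVert i) (Q.getVert (i+4)) := by
        have e1 := hadd i (i+2) (by omega)
        have e2 := hadd (i+2) (i+4) (by omega)
        have e3 := hadd i (i+4) (by omega)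
        have : wdist G' w' u (Q.getVert i)
            + (wdist G' w' (Q.getVert i) (Q.getVert (i+2))
              + wdist G' w' (Q.getVert (i+2)) (Q.getVert (i+4)))
            = wdist G' w' u (Q.getVert i)
              + wdist G' w' (Q.getVert i) (Q.getVert (i+4)) := by
          rw [← add_assoc, e1, e2, e3]
        exact (ENNReal.add_right_inj (hfin' u _)).1 this
      have tri : wdist G' w' (Q.getVert i) (Q.getVert (i+4))
          ≤ wdist G' w' (Q.getVert i) s + wdist G' w' s (Q.getVert (i+4)) :=
        SG6.wdist_triangle _ _ _
      have hy' : wdist G' w' s (Q.getVert (i+4))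
          ≤ wdist G' w' (Q.getVert (i+2)) (Q.getVert (i+4)) := by
        rw [SG6.wdist_symm s, SG6.wdist_symm (Q.getVert (i+2))]
        exact hy
      obtain ⟨hx', hy''⟩ := SG6.sandwich hx hy' (le_trans (le_of_eq hAB) tri)
        (hfin' _ _) (hfin' _ _)
      -- build the two-edge replacement walk
      have he1 : G'.Adj (Q.getVert i) s := (hG' _ _).2 (Or.inr (Or.inl hsi))
      have he2 : G'.Adj s (Q.getVert (i+4)) := (hG' _ _).2 (Or.inr (Or.inr hsj))
      have hmw : ENNReal.ofReal (walkWeight w'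
          (SimpleGraph.Walk.cons he1 (SimpleGraph.Walk.cons he2 SimpleGraph.Walk.nil)))
          = wdist G' w' (Q.getVert i) (Q.getVert (i+4)) := by
        rw [SG6.walkWeight_cons, SG6.walkWeight_cons, SG6.walkWeight_nil, add_zero,
          hw'short _ _ he1 (Or.inl hsi), hw'short _ _ he2 (Or.inr hsj),
          ENNReal.ofReal_add ENNReal.toReal_nonneg ENNReal.toReal_nonneg,
          ENNReal.ofReal_toReal (hfin _ _), ENNReal.ofReal_toReal (hfin _ _),
          ← part1 (Q.getVert i) s, ← part1 s (Q.getVert (i+4)), hx', hy'']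
        exact hAB
      refine hrepl i (i+4) (by omega) hjL _ hmw ?_
      simp only [SimpleGraph.Walk.length_cons, SimpleGraph.Walk.length_nil]
      omega
  -- membership pattern for vertices of Q
  have hmultpath : ∀ m : ℕ, m ≤ Q.length → ∀ i : ℕ, i ≤ Q.length →
      Q.getVert m ∈ S (Q.getVert i) → i = m - 1 ∨ i = m + 1 := by
    intro m hm i hi hmem
    have h1 : ¬ (i + 2 ≤ m) := fun h => hS4 i m h hm (Or.inl hmem)
    have h2 : ¬ (m + 2 ≤ i) := fun h => hS4 m i h hi (Or.inr hmem)
    have h3 : i ≠ m := by intro h; subst h; exact hSnot _ hmem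
    omega
  -- counting
  have hsum1 : ∑ i ∈ Finset.range (Q.length + 1), (S (Q.getVert i)).card
      = (Q.length + 1) * k := by
    simp [hScard]
  have hdouble : ∑ i ∈ Finset.range (Q.length + 1), (S (Q.getVert i)).card
      = ∑ s : V, ((Finset.range (Q.length + 1)).filter
          (fun i => s ∈ S (Q.getVert i))).card := by
    simp only [Finset.card_filter]
    rw [Finset.sum_comm]
    refine Finset.sum_congr rfl fun i _ => ?_
    rw [← Finset.card_filter]
    congr 1
    exact (Finset.filter_univ_mem _).symm
  have hbound4 : ∀ s : V, ((Finset.range (Q.length + 1)).filter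
      (fun i => s ∈ S (Q.getVert i))).card ≤ 4 := by
    intro s
    set M := (Finset.range (Q.length + 1)).filter (fun i => s ∈ S (Q.getVert i)) with hM
    rcases M.eq_empty_or_nonempty with he | hne
    · simp [he]
    · have hmin := M.min'_mem hne
      have hsub : M ⊆ Finset.Icc (M.min' hne) (M.min' hne + 3) := by
        intro j hj
        have hj1 : M.min' hne ≤ j := M.min'_le j hj
        have hj2 : ¬ (M.min' hne + 4 ≤ j) := by
          intro h4
          have hjL : j ≤ Q.length := by
            have := (Finset.mem_filter.1 hj).1
            rw [Finset.mem_range] at this; omega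
          exact hwin (M.min' hne) j s h4 hjL
            (Finset.mem_filter.1 hmin).2 (Finset.mem_filter.1 hj).2
        rw [Finset.mem_Icc]; omega
      calc M.card ≤ (Finset.Icc (M.min' hne) (M.min' hne + 3)).card :=
            Finset.card_le_card hsub
        _ = 4 := by rw [Nat.card_Icc]; omega
  have hbound2 : ∀ m : ℕ, m ≤ Q.length →
      ((Finset.range (Q.length + 1)).filter
        (fun i => Q.getVert m ∈ S (Q.getVert i))).card ≤ 2 := by
    intro m hm
    have hsub : (Finset.range (Q.length + 1)).filter
        (fun i => Q.getVert m ∈ S (Q.getVert i)) ⊆ {m - 1, m + 1} := by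
      intro i hi
      obtain ⟨hiT, himem⟩ := Finset.mem_filter.1 hi
      have hiL : i ≤ Q.length := by rw [Finset.mem_range] at hiT; omega
      rcases hmultpath m hm i hiL himem with h | h <;> simp [h]
    calc ((Finset.range (Q.length + 1)).filter
          (fun i => Q.getVert m ∈ S (Q.getVert i))).card
        ≤ ({m - 1, m + 1} : Finset ℕ).card := Finset.card_le_card hsub
      _ ≤ 2 := (Finset.card_insert_le _ _).trans (by simp)
  -- image of Q's vertices
  have hinj : Set.InjOn (fun i => Q.getVert i)
      ((Finset.range (Q.length + 1) : Finset ℕ) : Set ℕ) := by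
    intro i hi j hj heq
    simp only [Finset.coe_range, Set.mem_Iio] at hi hj
    rcases lt_trichotomy i j with h | h | h
    · exact absurd heq (hdist i j h (by omega))
    · exact h
    · exact absurd heq.symm (hdist j i h (by omega))
  have himg : ((Finset.range (Q.length + 1)).image (fun i => Q.getVert i)).card
      = Q.length + 1 := by
    rw [Finset.card_image_of_injOn hinj, Finset.card_range]
  have hLn : Q.length + 1 ≤ Fintype.card V := by
    rw [← himg]
    exact Finset.card_le_univ _
  -- assemble the count
  have hcount : (Q.length + 1) * k
      ≤ 2 * (Q.length + 1) + 4 * (Fintype.card V - (Q.length + 1)) := by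
    rw [← hsum1] at *
    rw [hdouble] at *
    have hsplit := (Finset.sum_sdiff (Finset.subset_univ
      ((Finset.range (Q.length + 1)).image (fun i => Q.getVert i)))
      (f := fun s : V => ((Finset.range (Q.length + 1)).filter
        (fun i => s ∈ S (Q.getVert i))).card)).symm
    rw [hsplit]
    have b1 : ∑ s ∈ Finset.univ \
          ((Finset.range (Q.length + 1)).image (fun i => Q.getVert i)),
        ((Finset.range (Q.length + 1)).filter (fun i => s ∈ S (Q.getVert i))).card
        ≤ 4 * (Fintype.card V - (Q.length + 1)) := by
      calc _ ≤ ∑ _s ∈ Finset.univ \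
            ((Finset.range (Q.length + 1)).image (fun i => Q.getVert i)), 4 :=
            Finset.sum_le_sum (fun s _ => hbound4 s)
        _ = (Finset.univ \
            ((Finset.range (Q.length + 1)).image (fun i => Q.getVert i))).card * 4 := by
            rw [Finset.sum_const, smul_eq_mul]
        _ = (Fintype.card V - (Q.length + 1)) * 4 := by
            rw [Finset.card_sdiff_of_subset (Finset.subset_univ _), himg, Finset.card_univ]
        _ = 4 * (Fintype.card V - (Q.length + 1)) := Nat.mul_comm _ _
    have b2 : ∑ s ∈ (Finset.range (Q.length + 1)).image (fun i => Q.getVert i),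
        ((Finset.range (Q.length + 1)).filter (fun i => s ∈ S (Q.getVert i))).card
        ≤ 2 * (Q.length + 1) := by
      calc _ ≤ ∑ _s ∈ (Finset.range (Q.length + 1)).image (fun i => Q.getVert i), 2 := by
            refine Finset.sum_le_sum (fun s hs => ?_)
            obtain ⟨m, hm, rfl⟩ := Finset.mem_image.1 hs
            exact hbound2 m (by rw [Finset.mem_range] at hm; omega)
        _ = 2 * (Q.length + 1) := by
            rw [Finset.sum_const, smul_eq_mul, himg, Nat.mul_comm]
    omega
  have hnat : Q.length * k < 4 * Fintype.card V := by
    have he : (Q.length + 1) * k = Q.length * k + k := by ring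
    rw [he] at hcount
    omega
  refine ⟨Q, hQw, ?_⟩
  have hk0 : (0:ℝ) < (k : ℝ) := by exact_mod_cast hk1
  rw [lt_div_iff₀ hk0]
  exact_mod_cast hnat
end
end

section
/- Let (G,w) be a connected finite weighted graph on n vertices with positive real edge weights, let k be an integer with 1 ≤ k ≤ n−1, and for each vertex u let S(u) be a set of k nearest vertices to u. Let (G',w') be the k-shortcut graph of (G,w). Let u,v be vertices and let P = ⟨u = x_0, x_1, …, x_ℓ = v⟩ be a path in G' with w'(P) = dist_{G',w'}(u,v) that has the minimum number of edges among all u–v paths in G' of weight dist_{G',w'}(u,v). Then for every integer i with 0 ≤ i ≤ ℓ/4 − 1, the sets S(x_{4i}) and S(x_{4(i+1)}) are disjoint. -/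
open SimpleGraph
open scoped ENNReal

noncomputable section

namespace ShortcutAux

open SimpleGraph Walk

variable {V : Type*} {G : SimpleGraph V} {w : Sym2 V → ℝ}

lemma walkWeight_cons {u v x : V} (h : G.Adj u v) (p : G.Walk v x) :
    walkWeight w (Walk.cons h p) = w s(u, v) + walkWeight w p := by
  simp [walkWeight]

lemma walkWeight_append {u v x : V} (p : G.Walk u v) (q : G.Walk v x) :
    walkWeight w (p.append q) = walkWeight w p + walkWeight w q := by
  simp [walkWeight, Walk.edges_append]

lemma walkWeight_nonneg (hnn : ∀ e ∈ G.edgeSet, 0 ≤ w e) {u v : V} (p : G.Walk u v) :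
    0 ≤ walkWeight w p := by
  apply List.sum_nonneg
  intro x hx
  obtain ⟨e, he, rfl⟩ := List.mem_map.mp hx
  exact hnn e (p.edges_subset_edgeSet he)

lemma wdist_le {u v : V} (p : G.Walk u v) :
    wdist G w u v ≤ ENNReal.ofReal (walkWeight w p) :=
  iInf_le _ p

lemma wdist_ne_top {u v : V} (h : G.Reachable u v) : wdist G w u v ≠ ⊤ := by
  obtain ⟨p⟩ := h
  exact ne_top_of_le_ne_top ENNReal.ofReal_ne_top (wdist_le p)

lemma wdist_comm_le (u v : V) : wdist G w u v ≤ wdist G w v u := by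
  refine le_iInf fun q => ?_
  refine (wdist_le q.reverse).trans_eq ?_
  congr 1
  simp [walkWeight, Walk.edges_reverse, List.sum_reverse]

lemma wdist_comm (u v : V) : wdist G w u v = wdist G w v u :=
  le_antisymm (wdist_comm_le u v) (wdist_comm_le v u)

lemma wdist_triangle (x y z : V) :
    wdist G w x z ≤ wdist G w x y + wdist G w y z := by
  rcases isEmpty_or_nonempty (G.Walk x y) with h | h
  · have hxy : wdist G w x y = ⊤ := by
      unfold wdist; exact iInf_of_empty _
    rw [hxy, top_add]
    exact le_top
  rcases isEmpty_or_nonempty (G.Walk y z) with h2 | h2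
  · have hyz : wdist G w y z = ⊤ := by
      unfold wdist; exact iInf_of_empty _
    rw [hyz, add_top]
    exact le_top
  have heq : wdist G w x y + wdist G w y z = ⨅ (p : G.Walk x y), ⨅ (q : G.Walk y z),
      (ENNReal.ofReal (walkWeight w p) + ENNReal.ofReal (walkWeight w q)) := by
    unfold wdist
    rw [ENNReal.iInf_add]
    exact iInf_congr fun p => ENNReal.add_iInf
  rw [heq]
  refine le_iInf fun p => le_iInf fun q => ?_
  refine (wdist_le (p.append q)).trans ?_
  rw [walkWeight_append]
  exact ENNReal.ofReal_add_le

/-- Lemma A: the `G`-distance between the endpoints of any `G'`-walk is at most the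
`w'`-weight of that walk, provided each `G'`-edge overweights the corresponding distance. -/
lemma wdist_le_walkWeight {G' : SimpleGraph V} {w' : Sym2 V → ℝ}
    (hnn : ∀ e ∈ G'.edgeSet, 0 ≤ w' e)
    (hedge : ∀ a b : V, G'.Adj a b → wdist G w a b ≤ ENNReal.ofReal (w' s(a, b)))
    {x y : V} (q : G'.Walk x y) :
    wdist G w x y ≤ ENNReal.ofReal (walkWeight w' q) := by
  induction q with
  | @nil a =>
    have h0 := wdist_le (w := w) (Walk.nil : G.Walk a a)
    simpa [walkWeight] using h0
  | @cons x x' y h q ih =>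
    calc wdist G w x y ≤ wdist G w x x' + wdist G w x' y := wdist_triangle x x' y
      _ ≤ ENNReal.ofReal (w' s(x, x')) + ENNReal.ofReal (walkWeight w' q) :=
          add_le_add (hedge _ _ h) ih
      _ = ENNReal.ofReal (w' s(x, x') + walkWeight w' q) :=
          (ENNReal.ofReal_add (hnn _ h) (walkWeight_nonneg hnn q)).symm
      _ = ENNReal.ofReal (walkWeight w' (Walk.cons h q)) := by rw [walkWeight_cons]

lemma exists_split {u v : V} (p : G.Walk u v) (n : ℕ) (hn : n ≤ p.length) :
    ∃ (q : G.Walk u (p.getVert n)) (r : G.Walk (p.getVert n) v),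
      p = q.append r ∧ q.length = n := by
  induction p generalizing n with
  | nil =>
    have hn0 : n = 0 := by simpa using hn
    subst hn0
    exact ⟨Walk.nil, Walk.nil, rfl, rfl⟩
  | @cons a b c h p ih =>
    cases n with
    | zero => exact ⟨Walk.nil, Walk.cons h p, rfl, rfl⟩
    | succ n =>
      obtain ⟨q, r, hpe, hql⟩ := ih n (by simpa [Nat.succ_le_succ_iff] using hn)
      rw [Walk.getVert_cons_succ]
      exact ⟨Walk.cons h q, r, by rw [Walk.cons_append, ← hpe], by simp [hql]⟩

lemma exists_split' {u v : V} (p : G.Walk u v) (n : ℕ) (hn : n ≤ p.length) {x : V}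
    (hx : p.getVert n = x) :
    ∃ (q : G.Walk u x) (r : G.Walk x v), p = q.append r ∧ q.length = n := by
  subst hx; exact exists_split p n hn

lemma getVert_mem_support {u v : V} (p : G.Walk u v) (n : ℕ) :
    p.getVert n ∈ p.support := by
  induction p generalizing n with
  | nil => simp [Walk.getVert]
  | cons h q ih =>
    cases n with
    | zero => simp
    | succ n =>
      rw [Walk.getVert_cons_succ, Walk.support_cons]
      exact List.mem_cons_of_mem _ (ih n)

lemma getVert_ne_of_isPath {u v : V} {p : G.Walk u v} (hp : p.IsPath) {i j : ℕ}
    (hij : i < j) (hj : j ≤ p.length) : p.getVert i ≠ p.getVert j := by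
  induction p generalizing i j with
  | nil => simp at hj; omega
  | @cons a b c h q ih =>
    rw [Walk.cons_isPath_iff] at hp
    cases i with
    | zero =>
      obtain ⟨j, rfl⟩ : ∃ j', j = j' + 1 := ⟨j - 1, by omega⟩
      rw [Walk.getVert_zero, Walk.getVert_cons_succ]
      intro hEq
      exact hp.2 (hEq ▸ getVert_mem_support q j)
    | succ i =>
      obtain ⟨j, rfl⟩ : ∃ j', j = j' + 1 := ⟨j - 1, by omega⟩
      rw [Walk.getVert_cons_succ, Walk.getVert_cons_succ]
      exact ih hp.1 (by omega) (by simpa [Nat.succ_le_succ_iff] using hj)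

lemma toFinset_sum_le_map_sum {α : Type*} [DecidableEq α] (f : α → ℝ) :
    ∀ (l : List α), (∀ x ∈ l, 0 ≤ f x) → (l.toFinset.sum f) ≤ (l.map f).sum
  | [], _ => by simp
  | a :: l, h => by
    simp only [List.toFinset_cons, List.map_cons, List.sum_cons]
    have hl := toFinset_sum_le_map_sum f l (fun x hx => h x (List.mem_cons_of_mem _ hx))
    by_cases ha : a ∈ l.toFinset
    · rw [Finset.insert_eq_self.mpr ha]
      have := h a List.mem_cons_self
      linarith
    · rw [Finset.sum_insert ha]
      linarith

lemma sum_map_le_of_nodup_subset {α : Type*} [DecidableEq α] (f : α → ℝ) {l₁ l₂ : List α}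
    (h₁ : l₁.Nodup) (hsub : l₁ ⊆ l₂) (hnn : ∀ x ∈ l₂, 0 ≤ f x) :
    (l₁.map f).sum ≤ (l₂.map f).sum := by
  have e1 : (l₁.map f).sum = l₁.toFinset.sum f := by
    rw [List.sum_toFinset _ h₁]
  rw [e1]
  calc l₁.toFinset.sum f ≤ l₂.toFinset.sum f := by
        refine Finset.sum_le_sum_of_subset_of_nonneg ?_ (fun x hx _ => hnn x ?_)
        · intro x hx
          rw [List.mem_toFinset] at hx ⊢
          exact hsub hx
        · exact List.mem_toFinset.mp hx
    _ ≤ (l₂.map f).sum := toFinset_sum_le_map_sum f l₂ hnn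

end ShortcutAux

open ShortcutAux

theorem stmt_7 {V : Type*} [Fintype V] (G : SimpleGraph V) (w : Sym2 V → ℝ)
    (hw : ∀ e ∈ G.edgeSet, 0 < w e) (hconn : G.Connected)
    (k : ℕ) (hk1 : 1 ≤ k) (hkn : k ≤ Fintype.card V - 1)
    -- `S u` is a set of `k` nearest vertices to `u`
    (S : V → Finset V)
    (hSnot : ∀ u, u ∉ S u) (hScard : ∀ u, (S u).card = k)
    (hSnear : ∀ u, ∀ y ∈ S u, ∀ y', y' ∉ S u → y' ≠ u →
      wdist G w u y ≤ wdist G w u y')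
    -- `(G', w')` is the `k`-shortcut graph of `(G, w)`
    (G' : SimpleGraph V)
    (hG' : ∀ a b : V, G'.Adj a b ↔ (G.Adj a b ∨ b ∈ S a ∨ a ∈ S b))
    (w' : Sym2 V → ℝ)
    (hw'short : ∀ a b : V, G'.Adj a b → (b ∈ S a ∨ a ∈ S b) →
      w' s(a, b) = (wdist G w a b).toReal)
    (hw'old : ∀ a b : V, G'.Adj a b → ¬(b ∈ S a ∨ a ∈ S b) →
      w' s(a, b) = w s(a, b))
    -- `p` is a shortest `u`–`v` path in `(G', w')` with the minimum number of edges
    -- among all shortest `u`–`v` paths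
    (u v : V) (p : G'.Walk u v) (hpath : p.IsPath)
    (hshort : ENNReal.ofReal (walkWeight w' p) = wdist G' w' u v)
    (hmin : ∀ q : G'.Walk u v, q.IsPath →
      ENNReal.ofReal (walkWeight w' q) = wdist G' w' u v → p.length ≤ q.length)
    (i : ℕ) (hi : 4 * (i + 1) ≤ p.length) :
    Disjoint (S (p.getVert (4 * i))) (S (p.getVert (4 * (i + 1)))) := by
  classical
  by_contra hdisj
  obtain ⟨z, hza, hzb⟩ := Finset.not_disjoint_iff.mp hdisj
  have h44 : 4 * (i + 1) = 4 * i + 4 := by ring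
  rw [h44] at hzb hi
  -- nonnegativity of `w'` on edges of `G'`
  have hw'nn : ∀ e ∈ G'.edgeSet, 0 ≤ w' e := by
    intro e he
    induction e using Sym2.ind with
    | _ a b =>
      rw [SimpleGraph.mem_edgeSet] at he
      by_cases hsc : b ∈ S a ∨ a ∈ S b
      · rw [hw'short a b he hsc]; exact ENNReal.toReal_nonneg
      · rw [hw'old a b he hsc]
        have hadj : G.Adj a b := ((hG' a b).mp he).resolve_right hsc
        exact le_of_lt (hw _ (by rw [SimpleGraph.mem_edgeSet]; exact hadj))
  -- each edge of `G'` overweights the corresponding `G`-distance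
  have hedge : ∀ a b : V, G'.Adj a b → wdist G w a b ≤ ENNReal.ofReal (w' s(a, b)) := by
    intro a b hab
    by_cases hsc : b ∈ S a ∨ a ∈ S b
    · rw [hw'short a b hab hsc,
        ENNReal.ofReal_toReal (wdist_ne_top (hconn.preconnected a b))]
    · rw [hw'old a b hab hsc]
      have hadj : G.Adj a b := ((hG' a b).mp hab).resolve_right hsc
      have := wdist_le (w := w) (Walk.cons hadj Walk.nil)
      simpa [walkWeight] using this
  -- no strictly shorter (in hops) walk of no larger weight can exist
  have key : ∀ q : G'.Walk u v, q.length < p.length → walkWeight w' q ≤ walkWeight w' p →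
      False := by
    intro q hql hqw
    have hb1 : walkWeight w' q.bypass ≤ walkWeight w' q :=
      sum_map_le_of_nodup_subset w' q.bypass_isPath.isTrail.edges_nodup
        q.edges_bypass_subset (fun e he => hw'nn e (q.edges_subset_edgeSet he))
    have h2 : ENNReal.ofReal (walkWeight w' q.bypass) = wdist G' w' u v := by
      refine le_antisymm ?_ (wdist_le _)
      rw [← hshort]
      exact ENNReal.ofReal_le_ofReal (hb1.trans hqw)
    have h3 := hmin q.bypass q.bypass_isPath h2
    have h4 := q.length_bypass_le
    omega
  -- split the path
  obtain ⟨q₁, r₁, hp1, hl1⟩ := exists_split p (4 * i) (by omega)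
  have hLp : p.length = q₁.length + r₁.length := by
    have := congrArg Walk.length hp1
    rwa [Walk.length_append] at this
  have hpg : ∀ t, p.getVert (4 * i + t) = r₁.getVert t := by
    intro t
    conv_lhs => rw [hp1]
    rw [Walk.getVert_append, hl1, if_neg (by omega), Nat.add_sub_cancel_left]
  obtain ⟨m, r₂, hr1, hlm⟩ := exists_split' r₁ 4 (by omega) (hpg 4).symm
  have hLr : r₁.length = m.length + r₂.length := by
    have := congrArg Walk.length hr1
    rwa [Walk.length_append] at this
  have hc2 : r₁.getVert 2 = m.getVert 2 := by
    conv_lhs => rw [hr1]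
    rw [Walk.getVert_append, if_pos (by omega)]
  obtain ⟨m₁, m₂, hm, hlm1⟩ := exists_split' m 2 (by omega)
    (hc2.symm.trans (hpg 2).symm)
  have hLm : m.length = m₁.length + m₂.length := by
    have := congrArg Walk.length hm
    rwa [Walk.length_append] at this
  -- weight decompositions
  have hWp : walkWeight w' p = walkWeight w' q₁ + walkWeight w' r₁ := by
    have := congrArg (fun q : G'.Walk u v => walkWeight w' q) hp1
    simpa [walkWeight_append] using this
  have hWr : walkWeight w' r₁ = walkWeight w' m + walkWeight w' r₂ := by
    have := congrArg (fun q : G'.Walk _ v => walkWeight w' q) hr1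
    simpa [walkWeight_append] using this
  have hWm : walkWeight w' m = walkWeight w' m₁ + walkWeight w' m₂ := by
    have := congrArg (fun q : G'.Walk _ _ => walkWeight w' q) hm
    simpa [walkWeight_append] using this
  -- distinct vertices along the path
  have hac : p.getVert (4 * i) ≠ p.getVert (4 * i + 2) :=
    getVert_ne_of_isPath hpath (by omega) (by omega)
  have hcb : p.getVert (4 * i + 2) ≠ p.getVert (4 * i + 4) :=
    getVert_ne_of_isPath hpath (by omega) (by omega)
  -- nonnegative weights of the pieces
  have hnnq₁ := walkWeight_nonneg hw'nn q₁
  have hnnm₁ := walkWeight_nonneg hw'nn m₁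
  have hnnm₂ := walkWeight_nonneg hw'nn m₂
  have hnnr₂ := walkWeight_nonneg hw'nn r₂
  -- a shortcut edge is no heavier than any parallel walk
  have hsb : ∀ (x y : V) (q : G'.Walk x y), (wdist G w x y).toReal ≤ walkWeight w' q := by
    intro x y q
    have h1 := wdist_le_walkWeight hw'nn hedge q
    have h2 := ENNReal.toReal_mono ENNReal.ofReal_ne_top h1
    rwa [ENNReal.toReal_ofReal (walkWeight_nonneg hw'nn q)] at h2
  by_cases h1 : p.getVert (4 * i + 2) ∈ S (p.getVert (4 * i))
  · -- shortcut from `x_{4i}` to `x_{4i+2}`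
    have adj : G'.Adj (p.getVert (4 * i)) (p.getVert (4 * i + 2)) :=
      (hG' _ _).mpr (Or.inr (Or.inl h1))
    refine key (q₁.append (Walk.cons adj (m₂.append r₂))) ?_ ?_
    · simp only [Walk.length_append, Walk.length_cons]; omega
    · rw [walkWeight_append, walkWeight_cons, walkWeight_append,
        hw'short _ _ adj (Or.inl h1)]
      have hb := hsb _ _ m₁
      linarith
  by_cases h2 : p.getVert (4 * i + 2) ∈ S (p.getVert (4 * i + 4))
  · -- shortcut from `x_{4i+2}` to `x_{4i+4}`
    have adj : G'.Adj (p.getVert (4 * i + 2)) (p.getVert (4 * i + 4)) :=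
      (hG' _ _).mpr (Or.inr (Or.inr h2))
    refine key (q₁.append (m₁.append (Walk.cons adj r₂))) ?_ ?_
    · simp only [Walk.length_append, Walk.length_cons]; omega
    · rw [walkWeight_append, walkWeight_append, walkWeight_cons,
        hw'short _ _ adj (Or.inr h2)]
      have hb := hsb _ _ m₂
      linarith
  · -- go through the common near vertex `z`
    have adj1 : G'.Adj (p.getVert (4 * i)) z := (hG' _ _).mpr (Or.inr (Or.inl hza))
    have adj2 : G'.Adj z (p.getVert (4 * i + 4)) := (hG' _ _).mpr (Or.inr (Or.inr hzb))
    have d1 : wdist G w (p.getVert (4 * i)) z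
        ≤ wdist G w (p.getVert (4 * i)) (p.getVert (4 * i + 2)) :=
      hSnear _ z hza _ h1 hac.symm
    have d2 : wdist G w (p.getVert (4 * i + 4)) z
        ≤ wdist G w (p.getVert (4 * i + 4)) (p.getVert (4 * i + 2)) :=
      hSnear _ z hzb _ h2 hcb
    have e1 : (wdist G w (p.getVert (4 * i)) z).toReal ≤ walkWeight w' m₁ := by
      have h1t := d1.trans (wdist_le_walkWeight hw'nn hedge m₁)
      have h2t := ENNReal.toReal_mono ENNReal.ofReal_ne_top h1t
      rwa [ENNReal.toReal_ofReal hnnm₁] at h2t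
    have e2 : (wdist G w z (p.getVert (4 * i + 4))).toReal ≤ walkWeight w' m₂ := by
      have hcm : wdist G w z (p.getVert (4 * i + 4))
          ≤ ENNReal.ofReal (walkWeight w' m₂) := by
        calc wdist G w z (p.getVert (4 * i + 4))
            = wdist G w (p.getVert (4 * i + 4)) z := wdist_comm _ _
          _ ≤ wdist G w (p.getVert (4 * i + 4)) (p.getVert (4 * i + 2)) := d2
          _ = wdist G w (p.getVert (4 * i + 2)) (p.getVert (4 * i + 4)) := wdist_comm _ _
          _ ≤ ENNReal.ofReal (walkWeight w' m₂) := wdist_le_walkWeight hw'nn hedge m₂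
      have h2t := ENNReal.toReal_mono ENNReal.ofReal_ne_top hcm
      rwa [ENNReal.toReal_ofReal hnnm₂] at h2t
    refine key (q₁.append (Walk.cons adj1 (Walk.cons adj2 r₂))) ?_ ?_
    · simp only [Walk.length_append, Walk.length_cons]; omega
    · rw [walkWeight_append, walkWeight_cons, walkWeight_cons,
        hw'short _ _ adj1 (Or.inl hza), hw'short _ _ adj2 (Or.inr hzb)]
      linarith
end
end

section
/- Let (G,w) be a connected finite weighted graph on at least k+1 vertices with positive real edge weights in which every vertex is incident to at least k edges. Assume all edge weights are pairwise distinct, and that for every vertex u the distances dist_{G,w}(u,v), v ≠ u, are pairwise distinct, and likewise the distances dist_{G^k,w}(u,v), v ≠ u, (where finite) are pairwise distinct. For each vertex u let E^k(u) be the set of the k edges incident to u of smallest weight, and let G^k be the spanning subgraph of G with edge set ⋃_{u} E^k(u). Then for every vertex u: there are at least k vertices at finite distance from u in (G^k,w), the set of the k vertices nearest to u in (G^k,w) equals the set of the k vertices nearest to u in (G,w), and for every vertex v in this set, dist_{G^k,w}(u,v) = dist_{G,w}(u,v). -/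
open SimpleGraph
open scoped ENNReal

noncomputable section

namespace WAux

variable {V : Type*} {G : SimpleGraph V} (w : Sym2 V → ℝ)

lemma walkWeight_nil {a : V} : walkWeight w (Walk.nil : G.Walk a a) = 0 := by
  simp [walkWeight]

lemma walkWeight_cons {a b c : V} (h : G.Adj a b) (p : G.Walk b c) :
    walkWeight w (Walk.cons h p) = w s(a, b) + walkWeight w p := by
  simp [walkWeight]

lemma walkWeight_append {a b c : V} (p : G.Walk a b) (q : G.Walk b c) :
    walkWeight w (p.append q) = walkWeight w p + walkWeight w q := by
  simp [walkWeight, Walk.edges_append]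

variable (hw0 : ∀ e ∈ G.edgeSet, 0 ≤ w e)

include hw0 in
lemma walkWeight_nonneg {a b : V} (p : G.Walk a b) : 0 ≤ walkWeight w p := by
  apply List.sum_nonneg
  intro x hx
  obtain ⟨e, he, rfl⟩ := List.mem_map.mp hx
  exact hw0 e (p.edges_subset_edgeSet he)

lemma wdist_le {u v : V} (p : G.Walk u v) :
    wdist G w u v ≤ ENNReal.ofReal (walkWeight w p) :=
  iInf_le _ p

include hw0 in
lemma wdist_add_walk {u b v : V} (q : G.Walk b v) :
    wdist G w u v ≤ wdist G w u b + ENNReal.ofReal (walkWeight w q) := by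
  have hrw : wdist G w u b + ENNReal.ofReal (walkWeight w q)
      = ⨅ r : G.Walk u b, (ENNReal.ofReal (walkWeight w r) + ENNReal.ofReal (walkWeight w q)) := by
    rw [wdist, ENNReal.iInf_add]
  rw [hrw]
  refine le_iInf fun r => ?_
  calc wdist G w u v ≤ ENNReal.ofReal (walkWeight w (r.append q)) := wdist_le w _
    _ = _ := by
        rw [walkWeight_append,
          ENNReal.ofReal_add (walkWeight_nonneg w hw0 r) (walkWeight_nonneg w hw0 q)]

include hw0 in
lemma wdist_le_adj {u a b : V} (h : G.Adj a b) :
    wdist G w u b ≤ wdist G w u a + ENNReal.ofReal (w s(a, b)) := by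
  have := wdist_add_walk w hw0 (u := u) (Walk.cons h Walk.nil)
  simpa [walkWeight_cons, walkWeight_nil] using this

include hw0 in
lemma exists_path_le {a b : V} (p : G.Walk a b) :
    ∃ q : G.Walk a b, q.IsPath ∧ walkWeight w q ≤ walkWeight w p := by
  classical
  induction p with
  | nil => exact ⟨Walk.nil, Walk.IsPath.nil, le_rfl⟩
  | @cons x y z h p ih =>
    obtain ⟨q, hq, hle⟩ := ih
    have hwe : 0 ≤ w s(x, y) := hw0 _ (G.mem_edgeSet.mpr h)
    by_cases hx : x ∈ q.support
    · refine ⟨q.dropUntil x hx, hq.dropUntil hx, ?_⟩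
      have hsp : walkWeight w q
          = walkWeight w (q.takeUntil x hx) + walkWeight w (q.dropUntil x hx) := by
        conv_lhs => rw [← q.take_spec hx]
        exact walkWeight_append w _ _
      have h1 : 0 ≤ walkWeight w (q.takeUntil x hx) := walkWeight_nonneg w hw0 _
      rw [walkWeight_cons]
      linarith
    · refine ⟨Walk.cons h q, hq.cons hx, ?_⟩
      rw [walkWeight_cons, walkWeight_cons]
      linarith

include hw0 in
lemma exists_shortest [Fintype V] {u v : V} (hr : G.Reachable u v) :
    ∃ p : G.Walk u v, p.IsPath ∧ wdist G w u v = ENNReal.ofReal (walkWeight w p) := by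
  classical
  haveI : DecidableRel G.Adj := Classical.decRel _
  haveI hne : Nonempty (G.Path u v) := hr.elim fun p => ⟨p.toPath⟩
  obtain ⟨p₀, hp₀⟩ := Finite.exists_min (fun p : G.Path u v => walkWeight w p.1)
  refine ⟨p₀.1, p₀.2, le_antisymm (iInf_le _ p₀.1) (le_iInf fun q => ?_)⟩
  obtain ⟨q', hq', hle⟩ := exists_path_le w hw0 q
  exact ENNReal.ofReal_le_ofReal ((hp₀ ⟨q', hq'⟩).trans hle)

lemma wdist_lt_top {u v : V} (hr : G.Reachable u v) : wdist G w u v < ⊤ :=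
  hr.elim fun p => lt_of_le_of_lt (wdist_le w p) ENNReal.ofReal_lt_top

lemma wdist_anti {G' : SimpleGraph V} (hle : G' ≤ G) (u v : V) :
    wdist G w u v ≤ wdist G' w u v := by
  refine le_iInf fun p => ?_
  have heq : walkWeight w (p.mapLe hle) = walkWeight w p := by
    have hc : ⇑(Hom.ofLE hle) = id := rfl
    simp [walkWeight, Walk.mapLe, Walk.edges_map, hc, Sym2.map_id]
  calc wdist G w u v ≤ ENNReal.ofReal (walkWeight w (p.mapLe hle)) := wdist_le w _
    _ = _ := by rw [heq]

lemma exists_kmin {α : Type*} [DecidableEq α] (f : α → ℝ≥0∞) :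
    ∀ (k : ℕ) (S : Finset α), k ≤ S.card → (∀ a ∈ S, ∀ b ∈ S, f a = f b → a = b) →
      ∃ T : Finset α, T ⊆ S ∧ T.card = k ∧ ∀ y ∈ T, ∀ y' ∈ S, y' ∉ T → f y < f y' := by
  intro k
  induction k with
  | zero => exact fun S _ _ => ⟨∅, Finset.empty_subset _, rfl, by simp⟩
  | succ n ih =>
    intro S hcard hinj
    have hSne : S.Nonempty := Finset.card_pos.mp (by omega)
    obtain ⟨m, hm, hmin⟩ := S.exists_min_image f hSne
    have hcard' : n ≤ (S.erase m).card := by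
      rw [Finset.card_erase_of_mem hm]; omega
    obtain ⟨T', hT'S, hT'card, hT'⟩ := ih (S.erase m) hcard'
      (fun a ha b hb h => hinj a (Finset.mem_of_mem_erase ha) b (Finset.mem_of_mem_erase hb) h)
    have hmT' : m ∉ T' := fun h => (Finset.mem_erase.mp (hT'S h)).1 rfl
    refine ⟨insert m T', ?_, ?_, ?_⟩
    · intro x hx
      rcases Finset.mem_insert.mp hx with rfl | hx
      · exact hm
      · exact Finset.mem_of_mem_erase (hT'S hx)
    · rw [Finset.card_insert_of_notMem hmT', hT'card]
    · intro y hy y' hy'S hy'T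
      have hy'm : y' ≠ m := fun h => hy'T (h ▸ Finset.mem_insert_self m T')
      rcases Finset.mem_insert.mp hy with rfl | hy
      · exact lt_of_le_of_ne (hmin y' hy'S) fun h => hy'm (hinj y' hy'S y hm h.symm)
      · exact hT' y hy y' (Finset.mem_erase.mpr ⟨hy'm, hy'S⟩)
          (fun h => hy'T (Finset.mem_insert_of_mem h))

end WAux

open WAux

/-- The key lemma: every edge of a shortest walk from `u` to a vertex in the set `T` of the
`k` nearest vertices lies in the `k`-nearest-neighbor graph `Gk`. -/
lemma edges_mem_Gk {V : Type*} [Fintype V] (G Gk : SimpleGraph V) (w : Sym2 V → ℝ)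
    (hw : ∀ e ∈ G.edgeSet, 0 < w e)
    (hwdistinct : ∀ e ∈ G.edgeSet, ∀ e' ∈ G.edgeSet, w e = w e' → e = e')
    (k : ℕ) (Ek : V → Finset (Sym2 V))
    (hEkcard : ∀ u, (Ek u).card = k)
    (hEkinc : ∀ u, ∀ e ∈ Ek u, e ∈ G.incidenceSet u)
    (hEkmin : ∀ u, ∀ e ∈ Ek u, ∀ e' ∈ G.incidenceSet u, e' ∉ Ek u → w e ≤ w e')
    (hGk : ∀ a b : V, Gk.Adj a b ↔ (G.Adj a b ∧ ∃ x : V, s(a, b) ∈ Ek x))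
    (u : V) (T : Finset V) (hTcard : T.card = k) (hTu : u ∉ T)
    (hT : ∀ y ∈ T, ∀ y' : V, y' ∉ T → y' ≠ u → wdist G w u y < wdist G w u y')
    {v a : V} (q : G.Walk a v) :
    ∀ (Pa : ℝ), v ∈ T → 0 ≤ Pa →
      wdist G w u a ≤ ENNReal.ofReal Pa →
      ENNReal.ofReal Pa + ENNReal.ofReal (walkWeight w q) = wdist G w u v →
      u ∉ q.support.tail →
      ∀ e ∈ q.edges, e ∈ Gk.edgeSet := by
  classical
  have hw0 : ∀ e ∈ G.edgeSet, 0 ≤ w e := fun e he => (hw e he).le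
  induction q with
  | nil => intro Pa _ _ _ _ _ e he; simp at he
  | @cons a b c hadj q' ih =>
    intro Pa hvT hPa0 h1 h2 h3 e he
    have hwe0 : 0 < w s(a, b) := hw _ (G.mem_edgeSet.mpr hadj)
    have hq'0 : 0 ≤ walkWeight w q' := walkWeight_nonneg w hw0 q'
    set Pb : ℝ := Pa + w s(a, b) with hPbdef
    have hPb0 : 0 ≤ Pb := by positivity
    -- invariant at b
    have h2' : ENNReal.ofReal Pb + ENNReal.ofReal (walkWeight w q') = wdist G w u c := by
      rw [← h2, walkWeight_cons, ENNReal.ofReal_add hwe0.le hq'0,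
        ENNReal.ofReal_add hPa0 hwe0.le, add_assoc]
    have hble : wdist G w u b ≤ ENNReal.ofReal Pb := by
      calc wdist G w u b ≤ wdist G w u a + ENNReal.ofReal (w s(a, b)) :=
            wdist_le_adj w hw0 hadj
        _ ≤ ENNReal.ofReal Pa + ENNReal.ofReal (w s(a, b)) := add_le_add_left h1 _
        _ = ENNReal.ofReal Pb := (ENNReal.ofReal_add hPa0 hwe0.le).symm
    have hPble : ENNReal.ofReal Pb ≤ wdist G w u b := by
      have hvle : wdist G w u c ≤ wdist G w u b + ENNReal.ofReal (walkWeight w q') :=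
        wdist_add_walk w hw0 q'
      rw [← h2'] at hvle
      exact (ENNReal.add_le_add_iff_right ENNReal.ofReal_ne_top).mp hvle
    have h3' : u ∉ q'.support := by
      simpa [Walk.support_cons] using h3
    have hbu : b ≠ u := fun h => h3' (h ▸ q'.start_mem_support)
    have hbT : b ∈ T := by
      by_contra hb
      have h4 := hT c hvT b hb hbu
      have h5 : wdist G w u b ≤ wdist G w u c := by
        calc wdist G w u b ≤ ENNReal.ofReal Pb := hble
          _ ≤ ENNReal.ofReal Pb + ENNReal.ofReal (walkWeight w q') := le_self_add
          _ = wdist G w u c := h2'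
      exact absurd h4 (not_lt.mpr h5)
    have memT : ∀ ζ : V, ζ ≠ u → wdist G w u ζ < wdist G w u b → ζ ∈ T := by
      intro ζ hζu hζ
      by_contra hζT
      exact lt_asymm hζ (hT b hbT ζ hζT hζu)
    rcases List.mem_cons.mp (by simpa [Walk.edges_cons] using he) with rfl | he'
    · -- the first edge is in `Gk`
      suffices hEka : s(a, b) ∈ Ek a by
        exact Gk.mem_edgeSet.mpr ((hGk a b).mpr ⟨hadj, a, hEka⟩)
      by_contra hnot
      have hinc : s(a, b) ∈ G.incidenceSet a := G.mk'_mem_incidenceSet_left_iff.mpr hadj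
      -- the other-endpoint function
      set f : Sym2 V → V := fun e' => if h : a ∈ e' then Sym2.Mem.other h else a with hfdef
      have hfe : ∀ e' ∈ Ek a, s(a, f e') = e' := by
        intro e' he'
        have ha_mem : a ∈ e' := (hEkinc a e' he').2
        have : f e' = Sym2.Mem.other ha_mem := dif_pos ha_mem
        rw [this, Sym2.other_spec]
      have hadjf : ∀ e' ∈ Ek a, G.Adj a (f e') := by
        intro e' he'
        have h1 := (hEkinc a e' he').1
        rw [← hfe e' he'] at h1
        exact G.mem_edgeSet.mp h1
      have hwlt : ∀ e' ∈ Ek a, w e' < w s(a, b) := by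
        intro e' he'
        have hle := hEkmin a e' he' (s(a, b)) hinc hnot
        refine lt_of_le_of_ne hle fun heq => hnot ?_
        have : e' = s(a, b) :=
          hwdistinct e' (G.incidenceSet_subset a (hEkinc a e' he')) (s(a, b))
            (G.mem_edgeSet.mpr hadj) heq
        exact this ▸ he'
      have hdzlt : ∀ e' ∈ Ek a, wdist G w u (f e') < wdist G w u b := by
        intro e' he'
        calc wdist G w u (f e') ≤ wdist G w u a + ENNReal.ofReal (w s(a, f e')) :=
              wdist_le_adj w hw0 (hadjf e' he')
          _ = wdist G w u a + ENNReal.ofReal (w e') := by rw [hfe e' he']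
          _ ≤ ENNReal.ofReal Pa + ENNReal.ofReal (w e') := add_le_add_left h1 _
          _ < ENNReal.ofReal Pa + ENNReal.ofReal (w s(a, b)) :=
              ENNReal.add_lt_add_left ENNReal.ofReal_ne_top
                ((ENNReal.ofReal_lt_ofReal_iff hwe0).mpr (hwlt e' he'))
          _ = ENNReal.ofReal Pb := (ENNReal.ofReal_add hPa0 hwe0.le).symm
          _ ≤ wdist G w u b := hPble
      have hab : wdist G w u a < wdist G w u b := by
        calc wdist G w u a ≤ ENNReal.ofReal Pa := h1
          _ < ENNReal.ofReal Pb := by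
              exact (ENNReal.ofReal_lt_ofReal_iff (by positivity)).mpr (by linarith)
          _ ≤ wdist G w u b := hPble
      set Z : Finset V := (Ek a).image f with hZdef
      have hZcard : Z.card = k := by
        rw [hZdef, Finset.card_image_of_injOn, hEkcard a]
        intro e₁ h₁ e₂ h₂ hf
        rw [← hfe e₁ h₁, ← hfe e₂ h₂, hf]
      have hZprop : ∀ z ∈ Z, z ≠ a ∧ wdist G w u z < wdist G w u b := by
        intro z hz
        obtain ⟨e', he', rfl⟩ := Finset.mem_image.mp hz
        exact ⟨(hadjf e' he').ne', hdzlt e' he'⟩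
      have haZ : a ∉ Z := fun h => (hZprop a h).1 rfl
      -- build a k-element set W of vertices different from u, all strictly nearer than b
      obtain ⟨W, hWcard, hWprop⟩ :
          ∃ W : Finset V, W.card = k ∧ ∀ z ∈ W, z ≠ u ∧ wdist G w u z < wdist G w u b := by
        by_cases hu : u ∈ Z
        · have hau : a ≠ u := fun h => (hZprop u hu).1 h.symm
          have hk1 : 1 ≤ k := by
            rw [← hZcard]; exact Finset.card_pos.mpr ⟨u, hu⟩
          refine ⟨insert a (Z.erase u), ?_, ?_⟩
          · rw [Finset.card_insert_of_notMem (fun h => haZ (Finset.mem_of_mem_erase h)),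
              Finset.card_erase_of_mem hu, hZcard]
            omega
          · intro z hz
            rcases Finset.mem_insert.mp hz with rfl | hz
            · exact ⟨hau, hab⟩
            · exact ⟨(Finset.mem_erase.mp hz).1, (hZprop z (Finset.mem_of_mem_erase hz)).2⟩
        · exact ⟨Z, hZcard, fun z hz => ⟨fun h => hu (h ▸ hz), (hZprop z hz).2⟩⟩
      have hWT : W ⊆ T := fun z hz => memT z (hWprop z hz).1 (hWprop z hz).2
      have hbW : b ∉ W := fun h => lt_irrefl _ (hWprop b h).2
      have hsub : insert b W ⊆ T := by
        intro x hx
        rcases Finset.mem_insert.mp hx with rfl | hx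
        · exact hbT
        · exact hWT hx
      have := Finset.card_le_card hsub
      rw [Finset.card_insert_of_notMem hbW, hWcard, hTcard] at this
      omega
    · -- edges of the tail, by induction
      exact ih Pb hvT hPb0 hble h2' (fun h => h3' (List.tail_subset _ h)) e he'

theorem stmt_8 {V : Type*} [Fintype V] (G : SimpleGraph V) (w : Sym2 V → ℝ)
    (hw : ∀ e ∈ G.edgeSet, 0 < w e) (hconn : G.Connected)
    (k : ℕ) (hk1 : 1 ≤ k) (hcard : k + 1 ≤ Fintype.card V)
    -- every vertex is incident to at least `k` edges
    (hdeg : ∀ u : V, k ≤ (G.incidenceSet u).ncard)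
    -- all edge weights are pairwise distinct
    (hwdistinct : ∀ e ∈ G.edgeSet, ∀ e' ∈ G.edgeSet, w e = w e' → e = e')
    -- distances from each vertex in `G` are pairwise distinct
    (hGdistinct : ∀ u : V, ∀ y y' : V, y ≠ u → y' ≠ u →
      wdist G w u y = wdist G w u y' → y = y')
    -- `Ek u` is the set of the `k` edges incident to `u` of smallest weight
    (Ek : V → Finset (Sym2 V))
    (hEkcard : ∀ u, (Ek u).card = k)
    (hEkinc : ∀ u, ∀ e ∈ Ek u, e ∈ G.incidenceSet u)
    (hEkmin : ∀ u, ∀ e ∈ Ek u, ∀ e' ∈ G.incidenceSet u, e' ∉ Ek u → w e ≤ w e')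
    -- `Gk` is the spanning subgraph of `G` with edge set `⋃ u, Ek u`
    (Gk : SimpleGraph V)
    (hGk : ∀ a b : V, Gk.Adj a b ↔ (G.Adj a b ∧ ∃ x : V, s(a, b) ∈ Ek x))
    -- finite distances from each vertex in `Gk` are pairwise distinct
    (hGkdistinct : ∀ u : V, ∀ y y' : V, y ≠ u → y' ≠ u → wdist Gk w u y < ⊤ →
      wdist Gk w u y = wdist Gk w u y' → y = y') :
    ∀ u : V,
      -- at least `k` vertices are at finite distance from `u` in `(Gk, w)`
      k ≤ {v : V | v ≠ u ∧ wdist Gk w u v < ⊤}.ncard ∧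
      -- the `k` nearest vertices to `u` in `(Gk, w)` are the `k` nearest in `(G, w)`,
      -- with equal distances
      ∃ T : Finset V, u ∉ T ∧ T.card = k ∧
        (∀ y ∈ T, ∀ y' : V, y' ∉ T → y' ≠ u → wdist G w u y < wdist G w u y') ∧
        (∀ y ∈ T, ∀ y' : V, y' ∉ T → y' ≠ u → wdist Gk w u y < wdist Gk w u y') ∧
        (∀ v ∈ T, wdist Gk w u v = wdist G w u v) := by
  classical
  intro u
  have hw0 : ∀ e ∈ G.edgeSet, 0 ≤ w e := fun e he => (hw e he).le
  have hGkle : Gk ≤ G := fun a b h => ((hGk a b).mp h).1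
  have hanti : ∀ x y : V, wdist G w x y ≤ wdist Gk w x y := fun x y =>
    wdist_anti w hGkle x y
  -- construct T, the set of the k nearest vertices to u in G
  have hS : k ≤ (Finset.univ.filter (· ≠ u)).card := by
    have : (Finset.univ.filter (· ≠ u)).card = Fintype.card V - 1 := by
      rw [Finset.filter_ne', Finset.card_erase_of_mem (Finset.mem_univ u), Finset.card_univ]
    omega
  obtain ⟨T, hTS, hTcard, hTmin⟩ := exists_kmin (wdist G w u) k _ hS
    (fun a ha b hb h => hGdistinct u a b (Finset.mem_filter.mp ha).2
      (Finset.mem_filter.mp hb).2 h)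
  have hTu : u ∉ T := fun h => (Finset.mem_filter.mp (hTS h)).2 rfl
  have hTprop : ∀ y ∈ T, ∀ y' : V, y' ∉ T → y' ≠ u → wdist G w u y < wdist G w u y' :=
    fun y hy y' h1 h2 => hTmin y hy y' (Finset.mem_filter.mpr ⟨Finset.mem_univ _, h2⟩) h1
  -- equality of distances on T
  have hGkeq : ∀ v ∈ T, wdist Gk w u v = wdist G w u v := by
    intro v hv
    obtain ⟨p, hp, hpeq⟩ := exists_shortest w hw0 (hconn.preconnected u v)
    have hedges : ∀ e ∈ p.edges, e ∈ Gk.edgeSet := by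
      refine edges_mem_Gk G Gk w hw hwdistinct k Ek hEkcard hEkinc hEkmin hGk u T
        hTcard hTu hTprop p 0 hv le_rfl ?_ ?_ ?_
      · have := wdist_le w (Walk.nil : G.Walk u u)
        simpa [walkWeight_nil] using this
      · rw [← hpeq]; simp
      · have h1 := hp.support_nodup
        rw [p.support_eq_cons] at h1
        exact (List.nodup_cons.mp h1).1
    have hle1 : wdist Gk w u v ≤ ENNReal.ofReal (walkWeight w p) := by
      have := wdist_le w (p.transfer Gk hedges)
      have heq : walkWeight w (p.transfer Gk hedges) = walkWeight w p := by
        simp [walkWeight, Walk.edges_transfer]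
      rwa [heq] at this
    exact le_antisymm (hpeq ▸ hle1) (hanti u v)
  refine ⟨?_, T, hTu, hTcard, hTprop, ?_, hGkeq⟩
  · -- at least k vertices at finite Gk-distance
    have hsub : (↑T : Set V) ⊆ {v : V | v ≠ u ∧ wdist Gk w u v < ⊤} := by
      intro v hv
      have hvT : v ∈ T := hv
      refine ⟨fun h => hTu (h ▸ hvT), ?_⟩
      rw [hGkeq v hvT]
      exact wdist_lt_top w (hconn.preconnected u v)
    calc k = T.card := hTcard.symm
      _ = (↑T : Set V).ncard := (Set.ncard_coe_finset T).symm
      _ ≤ _ := Set.ncard_le_ncard hsub (Set.toFinite _)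
  · -- nearest in Gk
    intro y hy y' hy'T hy'u
    calc wdist Gk w u y = wdist G w u y := hGkeq y hy
      _ < wdist G w u y' := hTprop y hy y' hy'T hy'u
      _ ≤ wdist Gk w u y' := hanti u y'
end
end

section
/- Let K be the complete graph on a finite vertex set V with symmetric positive real edge weights w, and write dist(a,b) = dist_{K,w}(a,b). Let k ≥ 1 be an integer with |V| ≥ k+1, and assume that for every vertex x the distances dist(x,y), y ≠ x, are pairwise distinct; let S(x) denote the set of the k vertices nearest to x. Let δ ≥ 0, let R ⊆ V, let d'' : V × V → ℝ satisfy dist(r,z) ≤ d''(r,z) ≤ (1+δ)·dist(r,z) for all r ∈ R and z ∈ V, and fix a vertex u together with a function w' : V → ℝ satisfying, for every vertex y ≠ u, dist(u,y) ≤ w'(y) ≤ w(uy) and w'(y) ≤ dist(u,z) + w(zy) for every z ∈ S(u). Define a weighted graph (G_u, w_u) on V whose edge weights are: w_u(a,b) is the minimum of the applicable values among (i) w'(b) if a = u (resp. w'(a) if b = u), (ii) dist(a,b) if b ∈ S(a) or a ∈ S(b), (iii) d''(a,b) if a ∈ R or b ∈ R; and there is no edge ab if none of (i)–(iii) applies.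 Then for every vertex v ≠ u such that R ∩ S(u) ≠ ∅ and R ∩ S(v) ≠ ∅: dist(u,v) ≤ dist_{G_u,w_u}(u,v) ≤ (2 + 2δ)·dist(u,v). -/
open SimpleGraph
open scoped ENNReal

noncomputable section

namespace Stmt10Aux

variable {V : Type*} {G : SimpleGraph V} (w : Sym2 V → ℝ)

lemma walkWeight_nil {a : V} : walkWeight w (Walk.nil : G.Walk a a) = 0 := rfl

lemma walkWeight_cons {a b c : V} (h : G.Adj a b) (p : G.Walk b c) :
    walkWeight w (Walk.cons h p) = w s(a, b) + walkWeight w p := by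
  simp [walkWeight]

lemma walkWeight_append {a b c : V} (p : G.Walk a b) (q : G.Walk b c) :
    walkWeight w (p.append q) = walkWeight w p + walkWeight w q := by
  simp [walkWeight]

lemma walkWeight_reverse {a b : V} (p : G.Walk a b) :
    walkWeight w p.reverse = walkWeight w p := by
  simp [walkWeight, List.map_reverse, List.sum_reverse]

lemma walkWeight_nonneg (hw : ∀ e ∈ G.edgeSet, 0 ≤ w e) {a b : V} (p : G.Walk a b) :
    0 ≤ walkWeight w p := by
  induction p with
  | nil => simp [walkWeight]
  | @cons x y z hadj p ih =>
    rw [walkWeight_cons]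
    have := hw s(x, y) hadj
    linarith

lemma wdist_le_walk {a b : V} (p : G.Walk a b) :
    wdist G w a b ≤ ENNReal.ofReal (walkWeight w p) := iInf_le _ p

lemma wdist_symm (a b : V) : wdist G w a b = wdist G w b a := by
  have key : ∀ x y : V, wdist G w x y ≤ wdist G w y x := by
    intro x y
    refine le_iInf fun p => ?_
    calc wdist G w x y ≤ ENNReal.ofReal (walkWeight w p.reverse) := wdist_le_walk w _
      _ = ENNReal.ofReal (walkWeight w p) := by rw [walkWeight_reverse]
  exact le_antisymm (key a b) (key b a)

lemma wdist_triangle (a b c : V) :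
    wdist G w a c ≤ wdist G w a b + wdist G w b c := by
  conv_rhs => rw [wdist, ENNReal.iInf_add]
  refine le_iInf fun p => ?_
  conv_rhs => rw [wdist, ENNReal.add_iInf]
  refine le_iInf fun q => ?_
  calc wdist G w a c ≤ ENNReal.ofReal (walkWeight w (p.append q)) := wdist_le_walk w _
    _ = ENNReal.ofReal (walkWeight w p + walkWeight w q) := by rw [walkWeight_append]
    _ ≤ _ := ENNReal.ofReal_add_le

lemma wdist_self (a : V) : wdist G w a a = 0 := by
  have := wdist_le_walk w (Walk.nil : G.Walk a a)
  simpa [walkWeight_nil] using this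

lemma wdist_top_ne_top (a b : V) : wdist (⊤ : SimpleGraph V) w a b ≠ ⊤ := by
  by_cases hab : a = b
  · subst hab; rw [wdist_self]; exact ENNReal.zero_ne_top
  · have hadj : (⊤ : SimpleGraph V).Adj a b := (top_adj a b).2 hab
    have := wdist_le_walk w (Walk.cons hadj Walk.nil)
    exact ne_top_of_le_ne_top ENNReal.ofReal_ne_top this

lemma toReal_wdist_le_walkWeight (hw : ∀ e ∈ (⊤ : SimpleGraph V).edgeSet, 0 < w e)
    {a b : V} (p : (⊤ : SimpleGraph V).Walk a b) :
    (wdist (⊤ : SimpleGraph V) w a b).toReal ≤ walkWeight w p :=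
  ENNReal.toReal_le_of_le_ofReal
    (walkWeight_nonneg w (fun e he => (hw e he).le) p) (wdist_le_walk w p)

lemma distR_triangle (a b c : V) :
    (wdist (⊤ : SimpleGraph V) w a c).toReal ≤
      (wdist (⊤ : SimpleGraph V) w a b).toReal + (wdist (⊤ : SimpleGraph V) w b c).toReal := by
  have h := wdist_triangle w (G := (⊤ : SimpleGraph V)) a b c
  have hfin : wdist (⊤ : SimpleGraph V) w a b + wdist (⊤ : SimpleGraph V) w b c ≠ ⊤ :=
    ENNReal.add_ne_top.2 ⟨wdist_top_ne_top w a b, wdist_top_ne_top w b c⟩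
  calc (wdist (⊤ : SimpleGraph V) w a c).toReal
      ≤ (wdist (⊤ : SimpleGraph V) w a b + wdist (⊤ : SimpleGraph V) w b c).toReal :=
        ENNReal.toReal_mono hfin h
    _ = _ := ENNReal.toReal_add (wdist_top_ne_top w a b) (wdist_top_ne_top w b c)

lemma distR_le_edge (hw : ∀ e ∈ (⊤ : SimpleGraph V).edgeSet, 0 < w e) {a b : V} (hab : a ≠ b) :
    (wdist (⊤ : SimpleGraph V) w a b).toReal ≤ w s(a, b) := by
  have hadj : (⊤ : SimpleGraph V).Adj a b := (top_adj a b).2 hab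
  have := toReal_wdist_le_walkWeight w hw (Walk.cons hadj Walk.nil)
  simpa [walkWeight_cons, walkWeight_nil] using this

lemma exists_walk_le (u v : V) {ε : ℝ} (hε : 0 < ε) :
    ∃ p : (⊤ : SimpleGraph V).Walk u v,
      walkWeight w p ≤ (wdist (⊤ : SimpleGraph V) w u v).toReal + ε := by
  have h1 : wdist (⊤ : SimpleGraph V) w u v < wdist (⊤ : SimpleGraph V) w u v + ENNReal.ofReal ε :=
    ENNReal.lt_add_right (wdist_top_ne_top w u v) (by simp [ENNReal.ofReal_pos.2 hε, ne_of_gt])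
  rw [wdist] at h1
  obtain ⟨p, hp⟩ := iInf_lt_iff.1 h1
  refine ⟨p, ?_⟩
  have h2 : ENNReal.ofReal (walkWeight w p) ≤
      ENNReal.ofReal ((wdist (⊤ : SimpleGraph V) w u v).toReal + ε) := by
    rw [ENNReal.ofReal_add ENNReal.toReal_nonneg hε.le,
      ENNReal.ofReal_toReal (wdist_top_ne_top w u v)]
    exact hp.le
  exact (ENNReal.ofReal_le_ofReal_iff (by positivity)).1 h2

lemma boundary (hw : ∀ e ∈ (⊤ : SimpleGraph V).edgeSet, 0 < w e) (u : V) (T : Finset V)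
    {a v : V} (p : (⊤ : SimpleGraph V).Walk a v)
    (ha : a ∈ T ∨ a = u) (hv1 : v ∉ T) (hv2 : v ≠ u) :
    ∃ (y x : V) (σ e : ℝ), (y ∉ T ∧ y ≠ u) ∧ (x ∈ T ∨ x = u) ∧ x ≠ y ∧
      (wdist (⊤ : SimpleGraph V) w u x).toReal + w s(x, y) ≤
        (wdist (⊤ : SimpleGraph V) w u a).toReal + σ ∧
      (wdist (⊤ : SimpleGraph V) w u y).toReal ≤ (wdist (⊤ : SimpleGraph V) w u a).toReal + σ ∧
      (wdist (⊤ : SimpleGraph V) w y v).toReal ≤ e ∧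
      σ + e ≤ walkWeight w p := by
  induction p with
  | nil =>
    exfalso
    rcases ha with h | h
    · exact hv1 h
    · exact hv2 h
  | @cons a b v hadj p ih =>
    by_cases hb : b ∈ T ∨ b = u
    · obtain ⟨y, x, σ, e, hy, hx, hxy, h1, h2, h3, h4⟩ := ih hb hv1 hv2
      refine ⟨y, x, w s(a, b) + σ, e, hy, hx, hxy, ?_, ?_, h3, ?_⟩
      · have htri : (wdist (⊤ : SimpleGraph V) w u b).toReal ≤
            (wdist (⊤ : SimpleGraph V) w u a).toReal + w s(a, b) :=
          (distR_triangle w u a b).trans (by linarith [distR_le_edge w hw hadj.ne])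
        linarith
      · have htri : (wdist (⊤ : SimpleGraph V) w u b).toReal ≤
            (wdist (⊤ : SimpleGraph V) w u a).toReal + w s(a, b) :=
          (distR_triangle w u a b).trans (by linarith [distR_le_edge w hw hadj.ne])
        linarith
      · rw [walkWeight_cons]; linarith
    · push_neg at hb
      refine ⟨b, a, w s(a, b), walkWeight w p, hb, ha, hadj.ne, le_refl _, ?_, ?_, ?_⟩
      · exact (distR_triangle w u a b).trans (by linarith [distR_le_edge w hw hadj.ne])
      · exact toReal_wdist_le_walkWeight w hw p
      · rw [walkWeight_cons]

end Stmt10Aux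

open Stmt10Aux

theorem stmt_10 {V : Type*} [Fintype V] (w : Sym2 V → ℝ)
    -- `⊤ : SimpleGraph V` is the complete graph on `V`; `w` is positive on its edges
    (hw : ∀ e ∈ (⊤ : SimpleGraph V).edgeSet, 0 < w e)
    (k : ℕ) (hk : 1 ≤ k) (hcard : k + 1 ≤ Fintype.card V)
    -- the distances from each vertex are pairwise distinct
    (hdistinct : ∀ x y y' : V, y ≠ x → y' ≠ x →
      wdist (⊤ : SimpleGraph V) w x y = wdist (⊤ : SimpleGraph V) w x y' → y = y')
    -- `S x` is the set of the `k` vertices nearest to `x`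
    (S : V → Finset V)
    (hSnot : ∀ x, x ∉ S x) (hScard : ∀ x, (S x).card = k)
    (hSnear : ∀ x : V, ∀ y ∈ S x, ∀ y' : V, y' ∉ S x → y' ≠ x →
      wdist (⊤ : SimpleGraph V) w x y < wdist (⊤ : SimpleGraph V) w x y')
    (δ : ℝ) (hδ : 0 ≤ δ) (R : Set V) (d'' : V → V → ℝ)
    (hd'' : ∀ r ∈ R, ∀ z : V,
      (wdist (⊤ : SimpleGraph V) w r z).toReal ≤ d'' r z ∧
      d'' r z ≤ (1 + δ) * (wdist (⊤ : SimpleGraph V) w r z).toReal)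
    (u : V) (w' : V → ℝ)
    (hw'1 : ∀ y : V, y ≠ u →
      (wdist (⊤ : SimpleGraph V) w u y).toReal ≤ w' y ∧ w' y ≤ w s(u, y))
    (hw'2 : ∀ y : V, y ≠ u → ∀ z ∈ S u, z ≠ y →
      w' y ≤ (wdist (⊤ : SimpleGraph V) w u z).toReal + w s(z, y))
    -- the weighted graph `(Gu, wu)`
    (Gu : SimpleGraph V) (wu : Sym2 V → ℝ)
    (hGu : ∀ a b : V, a ≠ b →
      (Gu.Adj a b ↔ (a = u ∨ b = u ∨ b ∈ S a ∨ a ∈ S b ∨ a ∈ R ∨ b ∈ R)))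
    -- the weight of an edge of `Gu` is the minimum of the applicable values
    (hwu : ∀ a b : V, Gu.Adj a b →
      IsLeast {x : ℝ |
        (a = u ∧ x = w' b) ∨ (b = u ∧ x = w' a) ∨
        ((b ∈ S a ∨ a ∈ S b) ∧ x = (wdist (⊤ : SimpleGraph V) w a b).toReal) ∨
        (a ∈ R ∧ x = d'' a b) ∨ (b ∈ R ∧ x = d'' b a)} (wu s(a, b))) :
    ∀ v : V, v ≠ u → (R ∩ (S u : Set V)).Nonempty → (R ∩ (S v : Set V)).Nonempty →
      wdist (⊤ : SimpleGraph V) w u v ≤ wdist Gu wu u v ∧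
      wdist Gu wu u v ≤
        ENNReal.ofReal (2 + 2 * δ) * wdist (⊤ : SimpleGraph V) w u v := by
  intro v hvu hRu hRv
  obtain ⟨ru, hru⟩ := hRu
  obtain ⟨rv, hrv⟩ := hRv
  have hruR : ru ∈ R := hru.1
  have hruS : ru ∈ S u := by exact_mod_cast hru.2
  have hrvR : rv ∈ R := hrv.1
  have hrvS : rv ∈ S v := by exact_mod_cast hrv.2
  set dR : V → V → ℝ := fun a b => (wdist (⊤ : SimpleGraph V) w a b).toReal with hdR
  have symmR : ∀ a b : V, dR a b = dR b a := fun a b => by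
    simp only [hdR]; rw [wdist_symm]
  have h2δ : (0:ℝ) < 2 + 2 * δ := by linarith
  -- lower bound for each edge of Gu
  have edge_lb : ∀ a b : V, Gu.Adj a b → dR a b ≤ wu s(a, b) := by
    intro a b hadj
    obtain ⟨hmem, -⟩ := hwu a b hadj
    rcases hmem with ⟨hau, hx⟩ | ⟨hbu, hx⟩ | ⟨-, hx⟩ | ⟨haR, hx⟩ | ⟨hbR, hx⟩
    · subst hau; rw [hx]; exact (hw'1 b hadj.ne').1
    · subst hbu; rw [hx, symmR]; exact (hw'1 a hadj.ne).1
    · rw [hx]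
    · rw [hx]; exact (hd'' a haR b).1
    · rw [hx, symmR]; exact (hd'' b hbR a).1
  have walk_lb : ∀ {a b : V} (p : Gu.Walk a b), dR a b ≤ walkWeight wu p := by
    intro a b p
    induction p with
    | nil => simp only [hdR]; rw [wdist_self]; simp [walkWeight_nil]
    | @cons x y z hadj p ih =>
      rw [walkWeight_cons]
      have h1 := distR_triangle w x y z
      have h2 := edge_lb x y hadj
      simp only [hdR] at *
      linarith
  constructor
  · -- lower bound
    refine le_iInf fun p => ?_
    have h1 : dR u v ≤ walkWeight wu p := walk_lb p
    calc wdist (⊤ : SimpleGraph V) w u v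
        = ENNReal.ofReal (dR u v) := (ENNReal.ofReal_toReal (wdist_top_ne_top w u v)).symm
      _ ≤ ENNReal.ofReal (walkWeight wu p) := ENNReal.ofReal_le_ofReal h1
  · -- upper bound
    have hone : (1 : ℝ≥0∞) ≤ ENNReal.ofReal (2 + 2 * δ) := by
      rw [ENNReal.one_le_ofReal]; linarith
    by_cases hvS : v ∈ S u
    · -- v ∈ S u : single edge with exact distance
      have hadj : Gu.Adj u v := (hGu u v (Ne.symm hvu)).2 (Or.inl rfl)
      have hle : wu s(u, v) ≤ dR u v :=
        (hwu u v hadj).2 (Or.inr (Or.inr (Or.inl ⟨Or.inl hvS, rfl⟩)))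
      calc wdist Gu wu u v
          ≤ ENNReal.ofReal (walkWeight wu (Walk.cons hadj Walk.nil)) := wdist_le_walk wu _
        _ ≤ ENNReal.ofReal (dR u v) := by
            refine ENNReal.ofReal_le_ofReal ?_
            rw [walkWeight_cons, walkWeight_nil]; linarith
        _ = wdist (⊤ : SimpleGraph V) w u v := ENNReal.ofReal_toReal (wdist_top_ne_top w u v)
        _ ≤ ENNReal.ofReal (2 + 2 * δ) * wdist (⊤ : SimpleGraph V) w u v :=
            le_mul_of_one_le_left zero_le hone
    · -- main case
      set d : ℝ := dR u v with hdd
      have hd0 : 0 ≤ d := ENNReal.toReal_nonneg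
      have key : ∀ ε : ℝ, 0 < ε →
          wdist Gu wu u v ≤ ENNReal.ofReal ((2 + 2 * δ) * (d + ε)) := by
        intro ε hε
        have hD0 : (0:ℝ) ≤ d + ε := by linarith
        obtain ⟨P, hP⟩ := exists_walk_le w u v hε
        obtain ⟨y, x, σ, e, ⟨hyS, hyu⟩, hxmem, hxy, hb1, hb2, hb3, hb4⟩ :=
          boundary w hw u (S u) P (Or.inr rfl) hvS hvu
        have h00 : (wdist (⊤ : SimpleGraph V) w u u).toReal = 0 := by
          rw [wdist_self]; simp
        rw [h00] at hb1 hb2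
        rw [zero_add] at hb1 hb2
        have hDbound : σ + e ≤ d + ε := le_trans hb4 hP
        have hσ0 : 0 ≤ σ := le_trans ENNReal.toReal_nonneg hb2
        have he0 : 0 ≤ e := le_trans ENNReal.toReal_nonneg hb3
        have hw'y : w' y ≤ σ := by
          rcases hxmem with hxS | hxu
          · exact (hw'2 y hyu x hxS hxy).trans hb1
          · subst hxu
            have h1 := (hw'1 y hyu).2
            rw [h00, zero_add] at hb1
            linarith
        -- produce a Gu walk of weight ≤ (2+2δ)(d+ε)
        suffices hsuff : ∃ p : Gu.Walk u v, walkWeight wu p ≤ (2 + 2 * δ) * (d + ε) by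
          obtain ⟨p, hp⟩ := hsuff
          exact (wdist_le_walk wu p).trans (ENNReal.ofReal_le_ofReal hp)
        by_cases hyv : y = v
        · subst hyv
          have hadj : Gu.Adj u y := (hGu u y (Ne.symm hyu)).2 (Or.inl rfl)
          refine ⟨Walk.cons hadj Walk.nil, ?_⟩
          have hle : wu s(u, y) ≤ w' y := (hwu u y hadj).2 (Or.inl ⟨rfl, rfl⟩)
          rw [walkWeight_cons, walkWeight_nil]
          nlinarith
        · by_cases hySv : y ∈ S v
          · -- walk u - y - v
            have hadj1 : Gu.Adj u y := (hGu u y (Ne.symm hyu)).2 (Or.inl rfl)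
            have hadj2 : Gu.Adj y v := (hGu y v hyv).2 (Or.inr (Or.inr (Or.inr (Or.inl hySv))))
            refine ⟨Walk.cons hadj1 (Walk.cons hadj2 Walk.nil), ?_⟩
            have hle1 : wu s(u, y) ≤ w' y := (hwu u y hadj1).2 (Or.inl ⟨rfl, rfl⟩)
            have hle2 : wu s(y, v) ≤ dR y v :=
              (hwu y v hadj2).2 (Or.inr (Or.inr (Or.inl ⟨Or.inr hySv, rfl⟩)))
            rw [walkWeight_cons, walkWeight_cons, walkWeight_nil]
            have : dR y v ≤ e := hb3
            nlinarith
          · -- y ∉ S v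
            have htv : dR v rv < dR v y :=
              ENNReal.toReal_strict_mono (wdist_top_ne_top w v y)
                (hSnear v rv hrvS y hySv hyv)
            have hyrv : y ≠ rv := fun h => hySv (h ▸ hrvS)
            have hrvv : rv ≠ v := fun h => hSnot v (h ▸ hrvS)
            have hdvy : dR v y ≤ e := by rw [symmR]; exact hb3
            by_cases hcase : d + ε ≤ (2 + 2 * δ) * σ
            · -- walk u - y - rv - v
              have hadj1 : Gu.Adj u y := (hGu u y (Ne.symm hyu)).2 (Or.inl rfl)
              have hadj2 : Gu.Adj y rv := (hGu y rv hyrv).2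
                (Or.inr (Or.inr (Or.inr (Or.inr (Or.inr hrvR)))))
              have hadj3 : Gu.Adj rv v := (hGu rv v hrvv).2
                (Or.inr (Or.inr (Or.inr (Or.inl hrvS))))
              refine ⟨Walk.cons hadj1 (Walk.cons hadj2 (Walk.cons hadj3 Walk.nil)), ?_⟩
              have hle1 : wu s(u, y) ≤ w' y := (hwu u y hadj1).2 (Or.inl ⟨rfl, rfl⟩)
              have hle2 : wu s(y, rv) ≤ d'' rv y :=
                (hwu y rv hadj2).2 (Or.inr (Or.inr (Or.inr (Or.inr ⟨hrvR, rfl⟩))))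
              have hle2' : d'' rv y ≤ (1 + δ) * dR rv y := (hd'' rv hrvR y).2
              have hle3 : wu s(rv, v) ≤ dR rv v :=
                (hwu rv v hadj3).2 (Or.inr (Or.inr (Or.inl ⟨Or.inr hrvS, rfl⟩)))
              have htri : dR rv y ≤ dR rv v + dR v y := distR_triangle w rv v y
              have hsym : dR rv v = dR v rv := symmR rv v
              rw [walkWeight_cons, walkWeight_cons, walkWeight_cons, walkWeight_nil]
              -- total ≤ σ + (1+δ)(t+e) + t with t = dR v rv < e ≤ d+ε-σ
              nlinarith [mul_nonneg hδ (sub_nonneg.2 hdvy)]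
            · -- walk u - ru - v
              push_neg at hcase
              have hs : dR u ru < dR u y :=
                ENNReal.toReal_strict_mono (wdist_top_ne_top w u y)
                  (hSnear u ru hruS y hyS hyu)
              have hsσ : dR u ru < σ := lt_of_lt_of_le hs hb2
              have hruv : ru ≠ v := fun h => hvS (h ▸ hruS)
              have hruu : u ≠ ru := fun h => hSnot u (h ▸ hruS)
              have hadj1 : Gu.Adj u ru := (hGu u ru hruu).2 (Or.inl rfl)
              have hadj2 : Gu.Adj ru v := (hGu ru v hruv).2
                (Or.inr (Or.inr (Or.inr (Or.inr (Or.inl hruR)))))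
              refine ⟨Walk.cons hadj1 (Walk.cons hadj2 Walk.nil), ?_⟩
              have hle1 : wu s(u, ru) ≤ dR u ru :=
                (hwu u ru hadj1).2 (Or.inr (Or.inr (Or.inl ⟨Or.inl hruS, rfl⟩)))
              have hle2 : wu s(ru, v) ≤ d'' ru v :=
                (hwu ru v hadj2).2 (Or.inr (Or.inr (Or.inr (Or.inl ⟨hruR, rfl⟩))))
              have hle2' : d'' ru v ≤ (1 + δ) * dR ru v := (hd'' ru hruR v).2
              have htri : dR ru v ≤ dR ru u + dR u v := distR_triangle w ru u v
              have hsym : dR ru u = dR u ru := symmR ru u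
              rw [walkWeight_cons, walkWeight_cons, walkWeight_nil]
              have hσ0' : 0 ≤ dR u ru := ENNReal.toReal_nonneg
              -- total ≤ s + (1+δ)(s+d) ≤ (2+δ)σ + (1+δ)(d+ε) ≤ (2+2δ)(d+ε)
              nlinarith [mul_le_mul_of_nonneg_left hcase.le (by linarith : (0:ℝ) ≤ 1 + δ),
                mul_nonneg hδ hσ0, mul_nonneg (mul_nonneg hδ hδ) hσ0,
                mul_nonneg hδ hε.le, mul_nonneg hδ hd0]
      -- conclude by letting ε → 0
      have main : wdist Gu wu u v ≤ ENNReal.ofReal ((2 + 2 * δ) * d) := by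
        refine ENNReal.le_of_forall_pos_le_add fun η hη _ => ?_
        have hε : (0:ℝ) < (η : ℝ) / (2 + 2 * δ) := div_pos (by exact_mod_cast hη) h2δ
        calc wdist Gu wu u v
            ≤ ENNReal.ofReal ((2 + 2 * δ) * (d + (η : ℝ) / (2 + 2 * δ))) := key _ hε
          _ = ENNReal.ofReal ((2 + 2 * δ) * d + (η : ℝ)) := by
              rw [mul_add, mul_div_cancel₀ _ (ne_of_gt h2δ)]
          _ ≤ ENNReal.ofReal ((2 + 2 * δ) * d) + ENNReal.ofReal (η : ℝ) :=
              ENNReal.ofReal_add_le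
          _ = ENNReal.ofReal ((2 + 2 * δ) * d) + (η : ℝ≥0∞) := by
              rw [ENNReal.ofReal_coe_nnreal]
      calc wdist Gu wu u v ≤ ENNReal.ofReal ((2 + 2 * δ) * d) := main
        _ = ENNReal.ofReal (2 + 2 * δ) * ENNReal.ofReal d := ENNReal.ofReal_mul (by linarith)
        _ = ENNReal.ofReal (2 + 2 * δ) * wdist (⊤ : SimpleGraph V) w u v := by
            rw [hdd, hdR, ENNReal.ofReal_toReal (wdist_top_ne_top w u v)]
end
end

section
/- Let (G,w) be a finite weighted graph with positive real edge weights, let h ≥ 1 be an integer, let δ ≥ 0, and let L ⊆ V be a set of vertices with s ∈ L. Let (G',w') be a weighted graph on vertex set L that has an edge xy whenever dist^h_{G,w}(x,y) < ∞, with a weight satisfying dist^h_{G,w}(x,y) ≤ w'(xy) ≤ (1+δ)·dist^h_{G,w}(x,y). Let u be a vertex of G, and for each v ∈ L let d'(u,v) be a value satisfying dist^h_{G,w}(u,v) ≤ d'(u,v) ≤ (1+δ)·dist^h_{G,w}(u,v) when dist^h_{G,w}(u,v) < ∞, and d'(u,v) = ∞ otherwise. Suppose there is a u–s walk P = ⟨u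 = v_0, v_1, …, v_k = s⟩ in G with w(P) = dist_{G,w}(u,s) such that, writing i_1 < i_2 < … < i_t for the indices j with v_{i_j} ∈ L (note i_t = k), one has i_1 ≤ h and i_{j+1} − i_j ≤ h for all 1 ≤ j < t. Then dist_{G,w}(u,s) ≤ min_{v ∈ L} ( d'(u,v) + dist_{G',w'}(v,s) ) ≤ (1+δ)·dist_{G,w}(u,s). -/
open SimpleGraph
open scoped ENNReal

noncomputable section

section Aux

variable {V : Type*} {G : SimpleGraph V} {w : Sym2 V → ℝ}

@[simp] lemma walkWeight_nil {u : V} : walkWeight w (Walk.nil : G.Walk u u) = 0 := rfl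

@[simp] lemma walkWeight_cons {u x v : V} (ha : G.Adj u x) (q : G.Walk x v) :
    walkWeight w (Walk.cons ha q) = w s(u, x) + walkWeight w q := by
  simp [walkWeight]

lemma walkWeight_nonneg {u v : V} (p : G.Walk u v) (hw : ∀ e ∈ G.edgeSet, 0 ≤ w e) :
    0 ≤ walkWeight w p := by
  induction p with
  | nil => simp
  | cons ha q ih =>
    simp only [walkWeight_cons]
    exact add_nonneg (hw _ ha) ih

lemma wdist_le {u v : V} (p : G.Walk u v) :
    wdist G w u v ≤ ENNReal.ofReal (walkWeight w p) :=
  iInf_le _ p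

lemma hopDist_le {h : ℕ} {u v : V} (p : G.Walk u v) (hp : p.length ≤ h) :
    hopDist G w h u v ≤ ENNReal.ofReal (walkWeight w p) :=
  iInf_le (fun q : {p : G.Walk u v // p.length ≤ h} =>
    ENNReal.ofReal (walkWeight w q.1)) ⟨p, hp⟩

lemma wdist_le_hopDist {h : ℕ} {u v : V} :
    wdist G w u v ≤ hopDist G w h u v :=
  le_iInf fun q => wdist_le q.1

lemma walkWeight_append {u x v : V} (p : G.Walk u x) (q : G.Walk x v) :
    walkWeight w (p.append q) = walkWeight w p + walkWeight w q := by
  simp [walkWeight, Walk.edges_append]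

lemma wdist_triangle (hw : ∀ e ∈ G.edgeSet, 0 ≤ w e) (u x v : V) :
    wdist G w u v ≤ wdist G w u x + wdist G w x v := by
  simp only [wdist]
  rw [ENNReal.iInf_add]
  refine le_iInf fun p => ?_
  rw [ENNReal.add_iInf]
  refine le_iInf fun q => ?_
  calc wdist G w u v ≤ ENNReal.ofReal (walkWeight w (p.append q)) := wdist_le _
    _ = ENNReal.ofReal (walkWeight w p) + ENNReal.ofReal (walkWeight w q) := by
        rw [walkWeight_append,
          ENNReal.ofReal_add (walkWeight_nonneg p hw) (walkWeight_nonneg q hw)]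

lemma wdist_le_edge_add {G' : SimpleGraph V} {w' : Sym2 V → ℝ} {x y z : V} (ha : G'.Adj x y) :
    wdist G' w' x z ≤ ENNReal.ofReal (w' s(x, y)) + wdist G' w' y z := by
  simp only [wdist]
  rw [ENNReal.add_iInf]
  refine le_iInf fun q => ?_
  calc (⨅ p : G'.Walk x z, ENNReal.ofReal (walkWeight w' p))
      ≤ ENNReal.ofReal (walkWeight w' (Walk.cons ha q)) := iInf_le _ _
    _ ≤ _ := by rw [walkWeight_cons]; exact ENNReal.ofReal_add_le

/-- The prefix of a walk consisting of its first (at most) `n` darts. -/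
def wtake : ∀ {u v : V} (p : G.Walk u v) (n : ℕ), G.Walk u (p.getVert n)
  | _, _, .nil, _ => .nil
  | _, _, .cons _ _, 0 => .nil
  | _, _, .cons h q, (n+1) => .cons h (wtake q n)

/-- The suffix of a walk obtained by removing its first (at most) `n` darts. -/
def wdrop : ∀ {u v : V} (p : G.Walk u v) (n : ℕ), G.Walk (p.getVert n) v
  | _, _, .nil, _ => .nil
  | _, _, p@(.cons _ _), 0 => p
  | _, _, .cons _ q, (n+1) => wdrop q n

lemma length_wtake_le : ∀ {u v : V} (p : G.Walk u v) (n : ℕ), (wtake p n).length ≤ n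
  | _, _, .nil, _ => by simp [wtake]
  | _, _, .cons _ _, 0 => by simp [wtake]; rfl
  | _, _, .cons h q, (n+1) => by
      simpa [wtake] using length_wtake_le q n

lemma getVert_wdrop : ∀ {u v : V} (p : G.Walk u v) (m n : ℕ),
    (wdrop p m).getVert n = p.getVert (m + n)
  | _, _, .nil, _, _ => by
      simp [wdrop, Walk.getVert_of_length_le]
  | _, _, .cons _ _, 0, n => by rw [Nat.zero_add]; rfl
  | _, _, .cons h q, (m+1), n => by
      have hmn : m + 1 + n = (m + n) + 1 := by omega
      rw [hmn]
      exact getVert_wdrop q m n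

lemma walkWeight_wtake_add_wdrop : ∀ {u v : V} (p : G.Walk u v) (n : ℕ),
    walkWeight w (wtake p n) + walkWeight (G := G) w (wdrop p n) = walkWeight w p
  | _, _, .nil, _ => by simp [wtake, wdrop]
  | _, _, .cons _ _, 0 => by simp [wtake, wdrop]; exact zero_add _
  | _, _, .cons h q, (n+1) => by
      simp only [wtake, wdrop, walkWeight_cons]
      rw [← walkWeight_wtake_add_wdrop q n]; exact add_assoc _ _ _

lemma walkWeight_wdrop_wdrop : ∀ {u v : V} (p : G.Walk u v) (m n : ℕ),
    walkWeight (G := G) w (wdrop (wdrop p m) n) = walkWeight (G := G) w (wdrop p (m + n))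
  | _, _, .nil, _, _ => by simp [wdrop]
  | _, _, .cons _ _, 0, n => by rw [Nat.zero_add]; rfl
  | _, _, .cons h q, (m+1), n => by
      have hmn : m + 1 + n = (m + n) + 1 := by omega
      rw [hmn]
      exact walkWeight_wdrop_wdrop q m n

end Aux

theorem stmt_15 {V : Type*} [Fintype V] (G : SimpleGraph V) (w : Sym2 V → ℝ)
    (hw : ∀ e ∈ G.edgeSet, 0 < w e)
    (h : ℕ) (hh : 1 ≤ h) (δ : ℝ) (hδ : 0 ≤ δ)
    (L : Set V) (src : V) (hsrc : src ∈ L)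
    -- `(G', w')` is a weighted graph on vertex set `L` having an edge `xy` whenever
    -- `hopDist G w h x y < ∞`, with weight satisfying
    -- `hopDist ≤ w'(xy) ≤ (1 + δ) · hopDist`
    (G' : SimpleGraph V) (w' : Sym2 V → ℝ)
    (hG'sub : ∀ x y : V, G'.Adj x y → x ∈ L ∧ y ∈ L)
    (hG'edge : ∀ x ∈ L, ∀ y ∈ L, x ≠ y → hopDist G w h x y < ⊤ → G'.Adj x y)
    (hw' : ∀ x y : V, G'.Adj x y →
      hopDist G w h x y ≤ ENNReal.ofReal (w' s(x, y)) ∧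
      ENNReal.ofReal (w' s(x, y)) ≤ ENNReal.ofReal (1 + δ) * hopDist G w h x y)
    -- `d' v` approximates the `h`-hop distance from `u` to each `v ∈ L`
    (u : V) (d' : V → ℝ≥0∞)
    (hd' : ∀ v ∈ L,
      (hopDist G w h u v < ⊤ →
        hopDist G w h u v ≤ d' v ∧ d' v ≤ ENNReal.ofReal (1 + δ) * hopDist G w h u v) ∧
      (hopDist G w h u v = ⊤ → d' v = ⊤))
    -- `p` is a shortest `u`–`src` walk whose vertices in `L` occur within the first `h`
    -- hops and at consecutive gaps of at most `h` hops
    (p : G.Walk u src)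
    (hpw : ENNReal.ofReal (walkWeight w p) = wdist G w u src)
    (hfirst : ∃ j : ℕ, (j ≤ p.length ∧ p.getVert j ∈ L) ∧ j ≤ h)
    (hgap : ∀ j : ℕ, j ≤ p.length → p.getVert j ∈ L → j < p.length →
      ∃ j' : ℕ, (j' ≤ p.length ∧ p.getVert j' ∈ L) ∧ j < j' ∧ j' ≤ j + h) :
    wdist G w u src ≤ (⨅ v ∈ L, (d' v + wdist G' w' v src)) ∧
    (⨅ v ∈ L, (d' v + wdist G' w' v src)) ≤
      ENNReal.ofReal (1 + δ) * wdist G w u src := by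
  classical
  have hwn : ∀ e ∈ G.edgeSet, 0 ≤ w e := fun e he => (hw e he).le
  -- a uniform positive lower bound on the edge weights of `G`
  obtain ⟨m, hm0, hmle⟩ : ∃ m : ℝ, 0 < m ∧ ∀ e ∈ G.edgeSet, m ≤ w e := by
    have hfin : G.edgeSet.Finite := Set.toFinite _
    rcases hfin.toFinset.eq_empty_or_nonempty with hE | hE
    · exact ⟨1, one_pos, fun e he =>
        absurd (hfin.mem_toFinset.mpr he) (hE ▸ Finset.notMem_empty e)⟩
    · obtain ⟨e₀, he₀, hmin⟩ := hfin.toFinset.exists_min_image w hE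
      exact ⟨w e₀, hw e₀ (hfin.mem_toFinset.mp he₀),
        fun e he => hmin e (hfin.mem_toFinset.mpr he)⟩
  -- hop distances between distinct vertices are positive
  have hhop_pos : ∀ x y : V, x ≠ y → ENNReal.ofReal m ≤ hopDist G w h x y := by
    intro x y hxy
    refine le_iInf fun q => ENNReal.ofReal_le_ofReal ?_
    obtain ⟨q, hq⟩ := q
    cases q with
    | nil => exact absurd rfl hxy
    | cons ha r =>
      rw [walkWeight_cons]
      have h1 := walkWeight_nonneg r hwn
      have h2 := hmle _ (G.mem_edgeSet.mpr ha)
      linarith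
  -- weights of `G'` edges are nonnegative
  have hw'nonneg : ∀ e ∈ G'.edgeSet, 0 ≤ w' e := by
    intro e he
    induction e using Sym2.ind with
    | _ x y =>
      have hadj : G'.Adj x y := he
      have h1 := (hw' x y hadj).1
      have h2 : (0 : ℝ≥0∞) < ENNReal.ofReal (w' s(x, y)) :=
        lt_of_lt_of_le (lt_of_lt_of_le (ENNReal.ofReal_pos.mpr hm0) (hhop_pos x y hadj.ne)) h1
      exact (ENNReal.ofReal_pos.mp h2).le
  -- walks in `G'` dominate `G`-distances
  have hG'walk : ∀ {a b : V} (q : G'.Walk a b),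
      wdist G w a b ≤ ENNReal.ofReal (walkWeight w' q) := by
    intro a b q
    induction q with
    | nil => exact (wdist_le (G := G) (w := w) Walk.nil).trans (by simp)
    | @cons a x b ha r ih =>
      rw [walkWeight_cons, ENNReal.ofReal_add (hw'nonneg _ (G'.mem_edgeSet.mpr ha))
        (walkWeight_nonneg r hw'nonneg)]
      calc wdist G w a b ≤ wdist G w a x + wdist G w x b := wdist_triangle hwn a x b
        _ ≤ _ := add_le_add (wdist_le_hopDist.trans (hw' a x ha).1) ih
  constructor
  · -- lower bound
    refine le_iInf fun v => le_iInf fun hv => ?_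
    by_cases hfin : hopDist G w h u v = ⊤
    · rw [(hd' v hv).2 hfin]
      simp
    · have hlt : hopDist G w h u v < ⊤ := lt_top_iff_ne_top.mpr hfin
      have h1 : wdist G w u v ≤ d' v := wdist_le_hopDist.trans ((hd' v hv).1 hlt).1
      have h2 : wdist G w v src ≤ wdist G' w' v src := le_iInf fun q => hG'walk q
      exact (wdist_triangle hwn u v src).trans (add_le_add h1 h2)
  · -- upper bound
    have hbase : ∀ j : ℕ, j = p.length →
        wdist G' w' (p.getVert j) src ≤
          ENNReal.ofReal (1 + δ) * ENNReal.ofReal (walkWeight w (wdrop p j)) := by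
      intro j hj
      have hsrc' : p.getVert j = src := Walk.getVert_of_length_le p (le_of_eq hj.symm)
      calc wdist G' w' (p.getVert j) src = wdist G' w' src src :=
            congrArg (fun z => wdist G' w' z src) hsrc'
        _ ≤ ENNReal.ofReal (walkWeight w' (Walk.nil : G'.Walk src src)) := wdist_le _
        _ = 0 := by simp
        _ ≤ _ := zero_le
    have key : ∀ k j : ℕ, j ≤ p.length → p.length - j ≤ k → p.getVert j ∈ L →
        wdist G' w' (p.getVert j) src ≤
          ENNReal.ofReal (1 + δ) * ENNReal.ofReal (walkWeight w (wdrop p j)) := by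
      intro k
      induction k with
      | zero =>
        intro j hj hk _
        exact hbase j (by omega)
      | succ k IH =>
        intro j hj hk hjL
        rcases eq_or_lt_of_le hj with heq | hlt
        · exact hbase j heq
        · obtain ⟨j', ⟨hj'le, hj'L⟩, hjj', hj'h⟩ := hgap j hj hjL hlt
          have hIH := IH j' hj'le (by omega) hj'L
          have hend : (wdrop p j).getVert (j' - j) = p.getVert j' := by
            rw [getVert_wdrop]
            congr 1
            omega
          have hsegsum : walkWeight w (wtake (wdrop p j) (j' - j)) +
              walkWeight w (wdrop p j') = walkWeight w (wdrop p j) := by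
            have h0 := walkWeight_wtake_add_wdrop (w := w) (wdrop p j) (j' - j)
            rw [walkWeight_wdrop_wdrop] at h0
            rwa [show j + (j' - j) = j' by omega] at h0
          have hseg0 : 0 ≤ walkWeight w (wtake (wdrop p j) (j' - j)) :=
            walkWeight_nonneg _ hwn
          have hdrop0 : 0 ≤ walkWeight w (wdrop p j') := walkWeight_nonneg _ hwn
          have hseglen : (wtake (wdrop p j) (j' - j)).length ≤ h :=
            (length_wtake_le _ _).trans (by omega)
          have hhopseg : hopDist G w h (p.getVert j) (p.getVert j') ≤
              ENNReal.ofReal (walkWeight w (wtake (wdrop p j) (j' - j))) := by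
            rw [← hend]
            exact hopDist_le _ hseglen
          by_cases hvv : p.getVert j = p.getVert j'
          · have heqd : wdist G' w' (p.getVert j) src = wdist G' w' (p.getVert j') src :=
              congrArg (fun z => wdist G' w' z src) hvv
            rw [heqd]
            refine hIH.trans (mul_le_mul_right (ENNReal.ofReal_le_ofReal ?_) _)
            rw [← hsegsum]
            linarith
          · have hadj : G'.Adj (p.getVert j) (p.getVert j') :=
              hG'edge _ hjL _ hj'L hvv (lt_of_le_of_lt hhopseg ENNReal.ofReal_lt_top)
            calc wdist G' w' (p.getVert j) src
                ≤ ENNReal.ofReal (w' s(p.getVert j, p.getVert j')) +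
                  wdist G' w' (p.getVert j') src := wdist_le_edge_add hadj
              _ ≤ ENNReal.ofReal (1 + δ) * hopDist G w h (p.getVert j) (p.getVert j') +
                  ENNReal.ofReal (1 + δ) * ENNReal.ofReal (walkWeight w (wdrop p j')) :=
                  add_le_add (hw' _ _ hadj).2 hIH
              _ ≤ ENNReal.ofReal (1 + δ) *
                    ENNReal.ofReal (walkWeight w (wtake (wdrop p j) (j' - j))) +
                  ENNReal.ofReal (1 + δ) * ENNReal.ofReal (walkWeight w (wdrop p j')) :=
                  add_le_add_left (mul_le_mul_right hhopseg _) _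
              _ = ENNReal.ofReal (1 + δ) * ENNReal.ofReal (walkWeight w (wdrop p j)) := by
                  rw [← mul_add, ← ENNReal.ofReal_add hseg0 hdrop0, hsegsum]
    obtain ⟨j₁, ⟨hj₁len, hj₁L⟩, hj₁h⟩ := hfirst
    have htake : hopDist G w h u (p.getVert j₁) ≤
        ENNReal.ofReal (walkWeight w (wtake p j₁)) :=
      hopDist_le _ ((length_wtake_le p j₁).trans hj₁h)
    have hfin : hopDist G w h u (p.getVert j₁) < ⊤ :=
      lt_of_le_of_lt htake ENNReal.ofReal_lt_top
    have hd1 : d' (p.getVert j₁) ≤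
        ENNReal.ofReal (1 + δ) * ENNReal.ofReal (walkWeight w (wtake p j₁)) :=
      ((hd' _ hj₁L).1 hfin).2.trans (mul_le_mul_right htake _)
    have hkey := key p.length j₁ hj₁len (by omega) hj₁L
    calc (⨅ v ∈ L, (d' v + wdist G' w' v src))
        ≤ d' (p.getVert j₁) + wdist G' w' (p.getVert j₁) src := iInf₂_le _ hj₁L
      _ ≤ ENNReal.ofReal (1 + δ) * ENNReal.ofReal (walkWeight w (wtake p j₁)) +
          ENNReal.ofReal (1 + δ) * ENNReal.ofReal (walkWeight w (wdrop p j₁)) :=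
          add_le_add hd1 hkey
      _ = ENNReal.ofReal (1 + δ) * ENNReal.ofReal (walkWeight w p) := by
          rw [← mul_add, ← ENNReal.ofReal_add (walkWeight_nonneg _ hwn)
            (walkWeight_nonneg _ hwn), walkWeight_wtake_add_wdrop]
      _ = ENNReal.ofReal (1 + δ) * wdist G w u src := by rw [hpw]
end
end
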